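/- arXiv:2209.09365 — 8 statements merged into one kernel-verified Lean document; each statement's English description precedes it below -/
import Mathlib

section
/- Let s ≥ 1 be an integer, let q be a nonzero complex number and fix a value τ of its logarithm; let λ, α₁, …, α_s be complex numbers and set Λ = e^{λτ} and qᵢ = e^{αᵢτ} for i = 1,…,s. Let a be a nonzero complex number and fix a value β of its logarithm. Suppose there exist constants c, ν > 0 such that |(λ + m₁α₁ + ⋯ + m_sα_s)τ − β − 2πm·i| > c·(m₁+⋯+m_s)^{−ν} for all nonnegative integers m₁,…,m_s not all zero and all integers m. Then there exists ν′ > 0 such that |Λ·q₁^{m₁}⋯q_s^{m_s} − a| > 2^{−ν′}·(m₁+⋯+m_s)^{−ν′} for all nonnegative integers m₁,…,m_s not all zero. -/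
/-- If `|Im w| ≤ π` and `|w| > 1/2`, then `|e^w - 1| ≥ 1/5`. -/
lemma expSubOne_large (w : ℂ) (hIm : |w.im| ≤ Real.pi) (hw : 1/2 < ‖w‖) :
    1/5 ≤ ‖Complex.exp w - 1‖ := by
  rcases le_or_gt (1/4) |w.re| with hx | hx
  · -- the real part is large
    have h1 : |‖Complex.exp w‖ - ‖(1:ℂ)‖|
        ≤ ‖Complex.exp w - 1‖ :=
      abs_norm_sub_norm_le _ _
    rw [Complex.norm_exp, norm_one] at h1
    rcases le_abs.mp hx with hx' | hx'
    · have h2 := Real.add_one_le_exp w.re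
      have h3 : Real.exp w.re - 1 ≤ |Real.exp w.re - 1| := le_abs_self _
      linarith
    · have h2 := Real.add_one_le_exp (-w.re)
      have h4 : Real.exp w.re * Real.exp (-w.re) = 1 := by
        rw [← Real.exp_add]; simp
      have h5 : (0:ℝ) < Real.exp w.re := Real.exp_pos _
      have h6 : Real.exp w.re ≤ 4/5 := by
        nlinarith
      have h3 : -(Real.exp w.re - 1) ≤ |Real.exp w.re - 1| := neg_le_abs _
      linarith
  · -- the real part is small, so the imaginary part is bounded away from 0
    have hsq : ‖w‖^2 = w.re^2 + w.im^2 := by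
      rw [Complex.sq_norm, Complex.normSq_apply]; ring
    have hx2 : w.re^2 < 1/16 := by nlinarith [sq_abs w.re, abs_nonneg w.re]
    have hy2 : 3/16 < w.im^2 := by nlinarith [norm_nonneg w]
    have hy : (0.43:ℝ) ≤ |w.im| := by nlinarith [sq_abs w.im, abs_nonneg w.im]
    have hcos : Real.cos w.im ≤ 0.91 := by
      have h1 : Real.cos w.im = Real.cos |w.im| := (Real.cos_abs w.im).symm
      have h2 : Real.cos |w.im| ≤ Real.cos 0.43 :=
        Real.cos_le_cos_of_nonneg_of_le_pi (by norm_num) hIm hy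
      have h3 := Real.cos_bound (x := 0.43) (by rw [abs_of_pos] <;> norm_num)
      rw [abs_le] at h3
      have h4 : |(0.43:ℝ)| = 0.43 := abs_of_pos (by norm_num)
      rw [h4] at h3
      nlinarith [h3.2]
    have hns : ‖Complex.exp w - 1‖ ^ 2
        = (Real.exp w.re * Real.cos w.im - 1)^2 + (Real.exp w.re * Real.sin w.im)^2 := by
      rw [Complex.sq_norm, Complex.normSq_apply]
      simp [Complex.exp_re, Complex.exp_im]
      ring
    have hpyth := Real.sin_sq_add_cos_sq w.im
    have hexp : (0:ℝ) < Real.exp w.re := Real.exp_pos _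
    have h15 : (1/25 : ℝ) ≤ ‖Complex.exp w - 1‖ ^ 2 := by
      rw [hns]
      nlinarith [sq_nonneg (Real.exp w.re - 0.91)]
    nlinarith [norm_nonneg (Complex.exp w - 1)]

/-- Key estimate: if `z` stays at distance `> δ` from `2πiℤ`, then `|e^z-1| > δ/10`. -/
lemma expSubOne_key (z : ℂ) (δ : ℝ) (hδ0 : 0 < δ) (hδ1 : δ ≤ 1)
    (h : ∀ m : ℤ, δ < ‖z - 2 * (Real.pi : ℂ) * (m : ℂ) * Complex.I‖) :
    δ/10 < ‖Complex.exp z - 1‖ := by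
  set m : ℤ := round (z.im / (2*Real.pi)) with hm
  set w : ℂ := z - 2 * (Real.pi : ℂ) * (m : ℂ) * Complex.I with hwdef
  have hπ := Real.pi_pos
  have hez : Complex.exp w = Complex.exp z := by
    have h1 : w = z - (m:ℂ) * (2*(Real.pi:ℂ)*Complex.I) := by rw [hwdef]; ring
    rw [h1, Complex.exp_sub, Complex.exp_int_mul_two_pi_mul_I, div_one]
  have him : |w.im| ≤ Real.pi := by
    have h1 : w.im = z.im - 2*Real.pi*m := by
      rw [hwdef]
      simp [Complex.sub_im, Complex.mul_im, Complex.mul_re]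
    have h2 : z.im - 2*Real.pi*m = (2*Real.pi) * (z.im/(2*Real.pi) - m) := by
      field_simp
    have h3 := abs_sub_round (z.im / (2*Real.pi))
    rw [h1, h2, abs_mul, abs_of_pos (by positivity)]
    nlinarith [abs_nonneg (z.im/(2*Real.pi) - (m:ℝ))]
  have hwlb : δ < ‖w‖ := h m
  rcases le_or_gt ‖w‖ (1/2) with hsmall | hlarge
  · have hs := Complex.norm_exp_sub_one_sub_id_le (x := w) (by linarith)
    have ht : ‖w‖ ≤ ‖Complex.exp w - 1‖
        + ‖Complex.exp w - 1 - w‖ := by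
      have h1 := norm_sub_le (Complex.exp w - 1) (Complex.exp w - 1 - w)
      simpa only [sub_sub_cancel] using h1
    rw [← hez]
    nlinarith [norm_nonneg w]
  · have h1 := expSubOne_large w him hlarge
    rw [← hez]
    linarith

/-- Lemma 1 of the paper, first multiplicative estimate.
From the additive diophantine condition on logarithms one obtains a lower
bound on the small divisors `Λ·q₁^{m₁}⋯q_s^{m_s} − a`. -/
theorem stmt0 (s : ℕ) (hs : 1 ≤ s) (q : ℂ) (hq : q ≠ 0) (τ : ℂ) (hτ : Complex.exp τ = q)
    (lam : ℂ) (α : Fin s → ℂ) (a : ℂ) (ha : a ≠ 0) (β : ℂ) (hβ : Complex.exp β = a)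
    (c ν : ℝ) (hc : 0 < c) (hν : 0 < ν)
    (h : ∀ M : Fin s → ℕ, M ≠ 0 → ∀ m : ℤ,
      ‖(lam + ∑ i, (M i : ℂ) * α i) * τ - β - 2 * (Real.pi : ℂ) * (m : ℂ) * Complex.I‖
        > c * ((∑ i, M i : ℕ) : ℝ) ^ (-ν)) :
    ∃ ν' > (0 : ℝ), ∀ M : Fin s → ℕ, M ≠ 0 →
      ‖Complex.exp (lam * τ) * ∏ i, Complex.exp (α i * τ) ^ M i - a‖
        > (2 : ℝ) ^ (-ν') * ((∑ i, M i : ℕ) : ℝ) ^ (-ν') := by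
  have haabs : (0:ℝ) < ‖a‖ := by
    simpa [norm_pos_iff] using ha
  set K : ℝ := ‖a‖ * min 1 c / 10 with hKdef
  have hK : 0 < K := by
    have : (0:ℝ) < min 1 c := lt_min one_pos hc
    positivity
  set ν' : ℝ := max ν (max 1 (Real.logb 2 K⁻¹)) with hν'def
  have hν'1 : (1:ℝ) ≤ ν' := le_trans (le_max_left _ _) (le_max_right _ _)
  refine ⟨ν', by linarith, ?_⟩
  intro M hM
  set N : ℕ := ∑ i, M i with hNdef
  have hN1 : 1 ≤ N := by
    rcases Nat.eq_zero_or_pos N with h0 | h1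
    · exfalso
      apply hM
      funext i
      exact (Finset.sum_eq_zero_iff.mp h0) i (Finset.mem_univ i)
    · exact h1
  have hNR : (1:ℝ) ≤ (N:ℝ) := by exact_mod_cast hN1
  have hNpos : (0:ℝ) < (N:ℝ) := by linarith
  set z : ℂ := (lam + ∑ i, (M i : ℂ) * α i) * τ - β with hzdef
  set δ : ℝ := min 1 (c * (N:ℝ) ^ (-ν)) with hδdef
  have hrpos : (0:ℝ) < (N:ℝ) ^ (-ν) := Real.rpow_pos_of_pos hNpos _
  have hδ0 : 0 < δ := lt_min one_pos (by positivity)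
  have hδ1 : δ ≤ 1 := min_le_left _ _
  have hkey : δ/10 < ‖Complex.exp z - 1‖ := by
    refine expSubOne_key z δ hδ0 hδ1 (fun m => ?_)
    calc δ ≤ c * (N:ℝ)^(-ν) := min_le_right _ _
      _ < _ := h M hM m
  -- rewrite the small divisor
  have heq : Complex.exp (lam * τ) * ∏ i, Complex.exp (α i * τ) ^ M i - a
      = a * (Complex.exp z - 1) := by
    have h1 : ∀ i ∈ Finset.univ, Complex.exp (α i * τ) ^ M i
        = Complex.exp ((M i : ℂ) * (α i * τ)) :=
      fun i _ => (Complex.exp_nat_mul _ _).symm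
    rw [Finset.prod_congr rfl h1, ← Complex.exp_sum, ← Complex.exp_add]
    have h2 : lam * τ + ∑ i, (M i : ℂ) * (α i * τ) = β + z := by
      rw [hzdef, add_mul, Finset.sum_mul]
      rw [Finset.sum_congr rfl (fun i _ => (mul_assoc ((M i : ℂ)) (α i) τ))]
      ring
    rw [h2, Complex.exp_add, hβ]
    ring
  rw [heq, norm_mul]
  have hmain : ‖a‖ * (δ/10) < ‖a‖ * ‖Complex.exp z - 1‖ :=
    mul_lt_mul_of_pos_left hkey haabs
  have hδlb : min 1 c * (N:ℝ)^(-ν) ≤ δ := by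
    refine le_min ?_ ?_
    · have h1 : (N:ℝ)^(-ν) ≤ 1 :=
        Real.rpow_le_one_of_one_le_of_nonpos hNR (by linarith)
      have h2 : min 1 c ≤ 1 := min_le_left _ _
      nlinarith [lt_min one_pos hc]
    · exact mul_le_mul_of_nonneg_right (min_le_right _ _) (le_of_lt hrpos)
  have h2pow : (2:ℝ)^(-ν') ≤ K := by
    have h1 : Real.logb 2 K⁻¹ ≤ ν' := le_trans (le_max_right _ _) (le_max_right _ _)
    rw [Real.logb_inv] at h1
    calc (2:ℝ)^(-ν') ≤ (2:ℝ)^(Real.logb 2 K) :=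
          Real.rpow_le_rpow_of_exponent_le one_le_two (by linarith)
      _ = K := Real.rpow_logb two_pos (by norm_num) hK
  have hNpow : ((N:ℝ))^(-ν') ≤ ((N:ℝ))^(-ν) :=
    Real.rpow_le_rpow_of_exponent_le hNR (neg_le_neg (le_max_left _ _))
  have hprod : (2:ℝ)^(-ν') * ((N:ℝ))^(-ν') ≤ K * ((N:ℝ))^(-ν) :=
    mul_le_mul h2pow hNpow (le_of_lt (Real.rpow_pos_of_pos hNpos _)) (le_of_lt hK)
  have hfin : K * ((N:ℝ))^(-ν) ≤ ‖a‖ * (δ/10) := by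
    rw [hKdef]
    nlinarith
  calc (2:ℝ)^(-ν') * ((N:ℝ))^(-ν') ≤ K * ((N:ℝ))^(-ν) := hprod
    _ ≤ ‖a‖ * (δ/10) := hfin
    _ < _ := hmain
end

section
/- Let s ≥ 1 be an integer, let q be a nonzero complex number and fix a value τ of its logarithm; let λ, α₁, …, α_s be complex numbers and set Λ = e^{λτ} and qᵢ = e^{αᵢτ} for i = 1,…,s. Let a be a nonzero complex number and fix a value β of its logarithm. Suppose there exist constants c, ν > 0 such that |(λ + m₁α₁ + ⋯ + m_sα_s)τ − β − 2πm·i| > c·(m₁+⋯+m_s)^{−ν} for all nonnegative integers m₁,…,m_s not all zero and all integers m. Then there exists ν′ > 0 such that |a·q₁^{−m₁}⋯q_s^{−m_s} − Λ| > 2^{−ν′}·(m₁+⋯+m_s)^{−ν′} for all nonnegative integers m₁,…,m_s not all zero. -/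
open Real Complex

lemma aux_lb (z : ℂ) (δ : ℝ) (hδ : 0 < δ) (hδ1 : δ ≤ 1)
    (h : δ ≤ |z.re| + |z.im - 2 * π * (round (z.im / (2 * π)) : ℤ)|) :
    δ / 8 ≤ ‖Complex.exp z - 1‖ := by
  have hπ := Real.pi_pos
  set x := z.re with hx_def
  set k : ℤ := round (z.im / (2 * π)) with hk_def
  set r : ℝ := z.im - 2 * π * k with hr_def
  have hrle : |r| ≤ π := by
    have h1 : |z.im / (2 * π) - k| ≤ 1 / 2 := abs_sub_round _
    have h2 : r = (z.im / (2 * π) - k) * (2 * π) := by field_simp [hr_def]; exact hr_def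
    rw [h2, abs_mul, abs_of_pos (by positivity : (0:ℝ) < 2 * π)]
    nlinarith [abs_nonneg (z.im / (2 * π) - (k:ℝ))]
  have hzim : z.im = r + k * (2 * π) := by rw [hr_def]; ring
  have hsin : Real.sin z.im = Real.sin r := by
    rw [hzim, Real.sin_add_int_mul_two_pi]
  have hcos : Real.cos z.im = Real.cos r := by
    rw [hzim, Real.cos_add_int_mul_two_pi]
  have habs1 : |Real.exp x - 1| ≤ ‖Complex.exp z - 1‖ := by
    have := abs_norm_sub_norm_le (Complex.exp z) 1
    simpa [Complex.norm_exp] using this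
  have him : Real.exp x * |Real.sin r| ≤ ‖Complex.exp z - 1‖ := by
    have h1 : |(Complex.exp z - 1).im| ≤ ‖Complex.exp z - 1‖ :=
      Complex.abs_im_le_norm _
    have h2 : (Complex.exp z - 1).im = Real.exp x * Real.sin z.im := by
      simp [Complex.exp_im, hx_def]
    rw [h2, hsin, abs_mul, abs_of_pos (Real.exp_pos x)] at h1
    exact h1
  have hre : |Real.exp x * Real.cos r - 1| ≤ ‖Complex.exp z - 1‖ := by
    have h1 : |(Complex.exp z - 1).re| ≤ ‖Complex.exp z - 1‖ :=
      Complex.abs_re_le_norm _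
    have h2 : (Complex.exp z - 1).re = Real.exp x * Real.cos z.im - 1 := by
      simp [Complex.exp_re, hx_def]
    rwa [h2, hcos] at h1
  rcases le_or_gt x (-(δ/2)) with hx | hx
  · -- x very negative
    have h1 : Real.exp x ≤ Real.exp (-(δ/2)) := Real.exp_le_exp.2 hx
    have h2 : Real.exp (-(δ/2)) * Real.exp (δ/2) = 1 := by
      rw [← Real.exp_add]; simp
    have h3 : 1 + δ/2 ≤ Real.exp (δ/2) := by linarith [Real.add_one_le_exp (δ/2)]
    have h4 : Real.exp x ≤ 1 - δ/3 := by
      nlinarith [Real.exp_pos (-(δ/2)), Real.exp_pos (δ/2)]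
    calc δ/8 ≤ |Real.exp x - 1| := by rw [abs_sub_comm, _root_.abs_of_nonneg (by linarith)]; linarith
    _ ≤ _ := habs1
  rcases le_or_gt (δ/2) x with hx2 | hx2
  · have h1 : x + 1 ≤ Real.exp x := Real.add_one_le_exp x
    calc δ/8 ≤ |Real.exp x - 1| := by rw [_root_.abs_of_nonneg (by linarith)]; linarith
    _ ≤ _ := habs1
  · -- |x| < δ/2, so |r| > δ/2
    have hxabs : |x| < δ/2 := abs_lt.2 ⟨by linarith, hx2⟩
    have hrgt : δ/2 < |r| := by linarith
    rcases le_or_gt |r| (π/2) with hr2 | hr2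
    · have hs1 : 2/π * |r| ≤ Real.sin |r| := Real.mul_le_sin (abs_nonneg r) hr2
      have hs2 : Real.sin |r| ≤ |Real.sin r| := by
        rcases abs_choice r with h' | h' <;> rw [h']
        · exact le_abs_self _
        · rw [Real.sin_neg]; exact neg_le_abs _
      have he : (1:ℝ)/2 ≤ Real.exp x := by
        have : Real.exp (-(1/2)) ≤ Real.exp x := Real.exp_le_exp.2 (by linarith)
        have h5 : Real.exp (-(1/2)) * Real.exp (1/2) = 1 := by rw [← Real.exp_add]; simp
        have h6 : Real.exp (1/2) ^ 2 = Real.exp 1 := by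
          rw [← Real.exp_nat_mul]; norm_num
        have h7 : Real.exp 1 < 2.7182818286 := Real.exp_one_lt_d9
        nlinarith [Real.exp_pos (1/2), Real.exp_pos (-(1/2))]
      have hπ4 : π < 4 := by nlinarith [Real.pi_lt_d2]
      calc δ/8 ≤ (1/2) * (2/π * (δ/2)) := by
            rw [show (1:ℝ)/2 * (2/π * (δ/2)) = δ/(2*π) by field_simp,
              div_le_div_iff₀ (by norm_num) (by positivity)]
            nlinarith
      _ ≤ Real.exp x * |Real.sin r| := by
            apply mul_le_mul he _ (by positivity) (Real.exp_pos x).le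
            calc 2/π * (δ/2) ≤ 2/π * |r| := by
                  apply mul_le_mul_of_nonneg_left hrgt.le (by positivity)
            _ ≤ Real.sin |r| := hs1
            _ ≤ |Real.sin r| := hs2
      _ ≤ _ := him
    · have hc1 : Real.cos r ≤ 0 := by
        rw [← Real.cos_abs]
        exact Real.cos_nonpos_of_pi_div_two_le_of_le hr2.le (by linarith)
      have hc2 : Real.exp x * Real.cos r - 1 ≤ -1 := by
        nlinarith [Real.exp_pos x]
      calc δ/8 ≤ 1 := by linarith
      _ ≤ |Real.exp x * Real.cos r - 1| := by rw [abs_sub_comm, _root_.abs_of_nonneg (by linarith)]; linarith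
      _ ≤ _ := hre

/-- Lemma 1 of the paper, second multiplicative estimate
(negative integer exponents, written with −mᵢ for nonnegative mᵢ). -/
theorem stmt1 (s : ℕ) (hs : 1 ≤ s) (q : ℂ) (hq : q ≠ 0) (τ : ℂ) (hτ : Complex.exp τ = q)
    (lam : ℂ) (α : Fin s → ℂ) (a : ℂ) (ha : a ≠ 0) (β : ℂ) (hβ : Complex.exp β = a)
    (c ν : ℝ) (hc : 0 < c) (hν : 0 < ν)
    (h : ∀ M : Fin s → ℕ, M ≠ 0 → ∀ m : ℤ,
      ‖(lam + ∑ i, (M i : ℂ) * α i) * τ - β - 2 * (Real.pi : ℂ) * (m : ℂ) * Complex.I‖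
        > c * ((∑ i, M i : ℕ) : ℝ) ^ (-ν)) :
    ∃ ν' > (0 : ℝ), ∀ M : Fin s → ℕ, M ≠ 0 →
      ‖a * ∏ i, Complex.exp (α i * τ) ^ (-(M i : ℤ)) - Complex.exp (lam * τ)‖
        > (2 : ℝ) ^ (-ν') * ((∑ i, M i : ℕ) : ℝ) ^ (-ν') := by
  have hK : (0:ℝ) < Real.exp ((lam * τ).re) := Real.exp_pos _
  set K : ℝ := Real.exp ((lam * τ).re) with hK_def
  have hmin : (0:ℝ) < min c 1 := lt_min hc one_pos
  set C : ℝ := K * min c 1 / 8 with hC_def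
  have hCpos : 0 < C := by positivity
  set ν' : ℝ := max ν (-Real.logb 2 C) + 1 with hν'_def
  have hνν' : ν ≤ ν' := by have := le_max_left ν (-Real.logb 2 C); linarith
  have hν'pos : 0 < ν' := by linarith
  have h2C : (2:ℝ) ^ (-ν') < C := by
    have h1 : -ν' < Real.logb 2 C := by
      have := le_max_right ν (-Real.logb 2 C); linarith
    have h2 : (2:ℝ) ^ (-ν') < (2:ℝ) ^ (Real.logb 2 C) :=
      (Real.rpow_lt_rpow_left_iff (by norm_num : (1:ℝ) < 2)).2 h1
    rwa [Real.rpow_logb (by norm_num) (by norm_num) hCpos] at h2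
  refine ⟨ν', hν'pos, fun M hM => ?_⟩
  set S : ℕ := ∑ i, M i with hS_def
  have hS1 : 1 ≤ S := by
    rcases Function.ne_iff.1 hM with ⟨i, hi⟩
    calc 1 ≤ M i := Nat.one_le_iff_ne_zero.2 (by simpa using hi)
    _ ≤ S := Finset.single_le_sum (fun j _ => Nat.zero_le _) (Finset.mem_univ i)
  have hSR : (1:ℝ) ≤ (S:ℝ) := by exact_mod_cast hS1
  have hSpos : (0:ℝ) < (S:ℝ) := by linarith
  have hp : (0:ℝ) < (S:ℝ) ^ (-ν) := Real.rpow_pos_of_pos hSpos _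
  have hle1 : (S:ℝ) ^ (-ν) ≤ 1 :=
    Real.rpow_le_one_of_one_le_of_nonpos hSR (by linarith)
  set z : ℂ := β - (lam + ∑ i, (M i : ℂ) * α i) * τ with hz_def
  set k : ℤ := round (z.im / (2 * Real.pi)) with hk_def
  set δ : ℝ := min (c * (S:ℝ) ^ (-ν)) 1 with hδ_def
  have hδpos : 0 < δ := lt_min (by positivity) one_pos
  have hδ1 : δ ≤ 1 := min_le_right _ _
  -- the distance hypothesis
  have hdist : δ ≤ |z.re| + |z.im - 2 * Real.pi * (k : ℤ)| := by
    have h1 := h M hM (-k)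
    have h2 : (lam + ∑ i, (M i : ℂ) * α i) * τ - β - 2 * (Real.pi : ℂ) * ((-k : ℤ) : ℂ) * Complex.I
        = -(z - 2 * (Real.pi : ℂ) * (k : ℂ) * Complex.I) := by
      rw [hz_def]; push_cast; ring
    rw [h2, norm_neg] at h1
    have h3 : ‖z - 2 * (Real.pi : ℂ) * (k : ℂ) * Complex.I‖
        ≤ |(z - 2 * (Real.pi : ℂ) * (k : ℂ) * Complex.I).re|
          + |(z - 2 * (Real.pi : ℂ) * (k : ℂ) * Complex.I).im| :=
      Complex.norm_le_abs_re_add_abs_im _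
    have h4 : (z - 2 * (Real.pi : ℂ) * (k : ℂ) * Complex.I).re = z.re := by simp
    have h5 : (z - 2 * (Real.pi : ℂ) * (k : ℂ) * Complex.I).im = z.im - 2 * Real.pi * k := by
      simp
    rw [h4, h5] at h3
    have h6 : δ ≤ c * (S:ℝ) ^ (-ν) := min_le_left _ _
    push_cast
    linarith
  have hkey : δ / 8 ≤ ‖Complex.exp z - 1‖ := aux_lb z δ hδpos hδ1 hdist
  -- algebraic identity
  have hprod : (∏ i, Complex.exp (α i * τ) ^ (-(M i : ℤ)))
      = Complex.exp (∑ i, ((-(M i : ℤ) : ℤ) : ℂ) * (α i * τ)) := by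
    rw [Complex.exp_sum]
    exact Finset.prod_congr rfl fun i _ => (Complex.exp_int_mul _ _).symm
  have hsum : (∑ i, ((-(M i : ℤ) : ℤ) : ℂ) * (α i * τ))
      = -((∑ i, (M i : ℂ) * α i) * τ) := by
    push_cast
    rw [Finset.sum_mul, ← Finset.sum_neg_distrib]
    exact Finset.sum_congr rfl fun i _ => by ring
  have hfact : a * (∏ i, Complex.exp (α i * τ) ^ (-(M i : ℤ))) - Complex.exp (lam * τ)
      = Complex.exp (lam * τ) * (Complex.exp z - 1) := by
    rw [hprod, hsum, ← hβ, ← Complex.exp_add, mul_sub, mul_one, ← Complex.exp_add]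
    congr 1
    rw [hz_def]; ring
  have habs : ‖a * (∏ i, Complex.exp (α i * τ) ^ (-(M i : ℤ)))
      - Complex.exp (lam * τ)‖ = K * ‖Complex.exp z - 1‖ := by
    rw [hfact, norm_mul, Complex.norm_exp]
  rw [habs]
  -- final chain
  have hδlb : min c 1 * (S:ℝ) ^ (-ν) ≤ δ := by
    apply le_min
    · exact mul_le_mul_of_nonneg_right (min_le_left c 1) hp.le
    · nlinarith [min_le_right c 1, hmin, hp, hle1]
  have hν'p : (0:ℝ) < (S:ℝ) ^ (-ν') := Real.rpow_pos_of_pos hSpos _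
  have hmono : (S:ℝ) ^ (-ν') ≤ (S:ℝ) ^ (-ν) :=
    Real.rpow_le_rpow_of_exponent_le hSR (by linarith)
  calc (2:ℝ) ^ (-ν') * (S:ℝ) ^ (-ν') < C * (S:ℝ) ^ (-ν') :=
        (mul_lt_mul_iff_of_pos_right hν'p).2 h2C
  _ ≤ C * (S:ℝ) ^ (-ν) := mul_le_mul_of_nonneg_left hmono hCpos.le
  _ = K * (min c 1 * (S:ℝ) ^ (-ν)) / 8 := by rw [hC_def]; ring
  _ ≤ K * δ / 8 := by nlinarith
  _ = K * (δ / 8) := by ring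
  _ ≤ K * ‖Complex.exp z - 1‖ := mul_le_mul_of_nonneg_left hkey hK.le
end

section
/- Let s ≥ 1 be an integer, let q be a nonzero complex number and fix a value τ of its logarithm; let α₁, …, α_s be complex numbers and set qᵢ = e^{αᵢτ} for i = 1,…,s. Suppose there exist constants c, ν > 0 such that |(m₁α₁ + ⋯ + m_sα_s)τ − 2πm·i| > c·(m₁+⋯+m_s)^{−ν} for all nonnegative integers m₁,…,m_s not all zero and all integers m. Then there exists ν′ > 0 such that both |q₁^{m₁}⋯q_s^{m_s} − 1| > 2^{−ν′}·(m₁+⋯+m_s)^{−ν′} and |q₁^{−m₁}⋯q_s^{−m_s} − 1| > 2^{−ν′}·(m₁+⋯+m_s)^{−ν′} for all nonnegative integers m₁,…,m_s not all zero. -/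
lemma key_est (w : ℂ) (δ : ℝ) (hδ : 0 < δ) (hδ1 : δ ≤ 1)
    (h : ∀ m : ℤ, δ < ‖w - 2 * (Real.pi : ℂ) * (m : ℂ) * Complex.I‖) :
    δ / 16 < ‖Complex.exp w - 1‖ := by
  set x := w.re with hxdef
  set y := w.im with hydef
  by_cases hx : δ / 8 ≤ |x|
  · -- case |Re w| large
    have h1 : |Real.exp x - 1| ≤ ‖Complex.exp w - 1‖ := by
      have := abs_norm_sub_norm_le (Complex.exp w) 1
      simpa [Complex.norm_exp] using this
    refine lt_of_lt_of_le ?_ h1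
    rcases le_or_gt 0 x with hx0 | hx0
    · rw [abs_of_nonneg hx0] at hx
      have h2 := Real.add_one_le_exp x
      rw [abs_of_nonneg (by linarith)]
      linarith
    · rw [abs_of_neg hx0] at hx
      have hA : (1 + (-x)) * Real.exp x ≤ 1 := by
        have h3 := Real.add_one_le_exp (-x)
        have hpos := Real.exp_pos x
        have h4 : (1 + (-x)) * Real.exp x ≤ Real.exp (-x) * Real.exp x := by
          nlinarith
        rwa [← Real.exp_add, neg_add_cancel, Real.exp_zero] at h4
      have hlt1 : Real.exp x < 1 := by
        rw [← Real.exp_zero]; exact Real.exp_lt_exp.2 hx0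
      rw [abs_of_neg (by linarith)]
      nlinarith [Real.exp_pos x]
  · push_neg at hx
    set m : ℤ := round (y / (2 * Real.pi)) with hmdef
    set t : ℝ := y - 2 * Real.pi * m with htdef
    have hπ := Real.pi_pos
    have ht1 : |t| ≤ Real.pi := by
      have h2 := abs_sub_round (y / (2 * Real.pi))
      have heq : t = (y / (2 * Real.pi) - m) * (2 * Real.pi) := by
        rw [htdef, sub_mul, div_mul_cancel₀ _ (by positivity)]; ring
      rw [heq, abs_mul, abs_of_pos (show (0:ℝ) < 2 * Real.pi by positivity)]
      nlinarith
    have hsq : δ ^ 2 < x ^ 2 + t ^ 2 := by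
      have h2 := h m
      have habs : ‖w - 2 * (Real.pi:ℂ) * (m:ℂ) * Complex.I‖ ^ 2
          = x ^ 2 + t ^ 2 := by
        rw [Complex.sq_norm, Complex.normSq_apply]
        simp [htdef]
        ring
      nlinarith [norm_nonneg (w - 2 * (Real.pi:ℂ) * (m:ℂ) * Complex.I)]
    have ht2 : δ / 2 < |t| := by
      have h5 : (δ/2)^2 < |t|^2 := by
        have h6 : x^2 < (δ/8)^2 := by nlinarith [abs_nonneg x, _root_.sq_abs x, neg_abs_le x]
        nlinarith [_root_.sq_abs t]
      exact lt_of_pow_lt_pow_left₀ 2 (abs_nonneg t) h5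
    -- chord bound for exp(t i) - 1
    have hchord : 2 / Real.pi * |t| ≤ ‖Complex.exp (t * Complex.I) - 1‖ := by
      have hcos : Real.cos t ≤ 1 - 2 / Real.pi ^ 2 * t ^ 2 :=
        Real.cos_le_one_sub_mul_cos_sq ht1
      have hsq2 : ‖Complex.exp (t * Complex.I) - 1‖ ^ 2 = 2 - 2 * Real.cos t := by
        rw [Complex.sq_norm, Complex.normSq_apply]
        simp [Complex.exp_ofReal_mul_I_re, Complex.exp_ofReal_mul_I_im]
        nlinarith [Real.sin_sq_add_cos_sq t]
      refine le_of_pow_le_pow_left₀ two_ne_zero (norm_nonneg _) ?_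
      rw [hsq2]
      have h7 : (2 / Real.pi * |t|)^2 = 4 / Real.pi^2 * t^2 := by
        rw [mul_pow, div_pow, _root_.sq_abs]; ring
      rw [h7]
      have h9 : 4 / Real.pi^2 * t^2 = 2 * (2 / Real.pi^2 * t^2) := by ring
      linarith
    -- decomposition
    have hupper : |Real.exp x - 1| ≤ δ / 4 := by
      have hxle : |x| ≤ 1 := by linarith
      have := Real.abs_exp_sub_one_le hxle
      linarith
    have hyt : Complex.exp ((y:ℂ) * Complex.I) = Complex.exp ((t:ℂ) * Complex.I) := by
      have h8 : (y:ℂ) * Complex.I = (t:ℂ) * Complex.I + (m:ℤ) * (2 * (Real.pi:ℂ) * Complex.I) := by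
        have hy : (y:ℝ) = t + 2 * Real.pi * m := by rw [htdef]; ring
        rw [hy]; push_cast; ring
      rw [h8, Complex.exp_add, Complex.exp_int_mul_two_pi_mul_I, mul_one]
    have hdecomp : Complex.exp w - 1
        = (Complex.exp ((t:ℂ) * Complex.I) - 1)
          + Complex.exp ((y:ℂ) * Complex.I) * ((Real.exp x : ℂ) - 1) := by
      rw [← hyt]
      have hw : w = (x:ℂ) + (y:ℂ) * Complex.I := (Complex.re_add_im w).symm
      nth_rewrite 1 [hw]
      rw [Complex.exp_add, Complex.ofReal_exp]
      ring
    have htri : ‖Complex.exp ((t:ℂ) * Complex.I) - 1‖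
        - ‖Complex.exp ((y:ℂ) * Complex.I) * ((Real.exp x : ℂ) - 1)‖
        ≤ ‖Complex.exp w - 1‖ := by
      rw [hdecomp]
      have := norm_add_le (Complex.exp ((t:ℂ) * Complex.I) - 1
          + Complex.exp ((y:ℂ) * Complex.I) * ((Real.exp x : ℂ) - 1))
          (-(Complex.exp ((y:ℂ) * Complex.I) * ((Real.exp x : ℂ) - 1)))
      simpa using this
    have habs2 : ‖Complex.exp ((y:ℂ) * Complex.I) * ((Real.exp x : ℂ) - 1)‖
        = |Real.exp x - 1| := by
      rw [norm_mul, Complex.norm_exp]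
      rw [← Complex.ofReal_one, ← Complex.ofReal_sub, Complex.norm_real]
      simp
    rw [habs2] at htri
    have hpi : Real.pi < 3.2 := by linarith [Real.pi_lt_d2]
    have hlow : δ / Real.pi < 2 / Real.pi * |t| := by
      have := mul_lt_mul_of_pos_left ht2 (show (0:ℝ) < 2 / Real.pi by positivity)
      calc δ / Real.pi = 2 / Real.pi * (δ / 2) := by field_simp
        _ < 2 / Real.pi * |t| := this
    have hfin : δ / 16 < δ / Real.pi - δ / 4 := by
      rw [div_sub_div _ _ (ne_of_gt hπ) (by norm_num : (4:ℝ) ≠ 0),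
        div_lt_div_iff₀ (by norm_num) (by positivity)]
      nlinarith
    linarith

/-- Lemma 1 of the paper, third estimate (with `a = q^λ`, so the
logarithms cancel): lower bounds for `|q^m − 1|` and `|q^{−m} − 1|`. -/
theorem stmt2 (s : ℕ) (hs : 1 ≤ s) (q : ℂ) (hq : q ≠ 0) (τ : ℂ) (hτ : Complex.exp τ = q)
    (α : Fin s → ℂ)
    (c ν : ℝ) (hc : 0 < c) (hν : 0 < ν)
    (h : ∀ M : Fin s → ℕ, M ≠ 0 → ∀ m : ℤ,
      ‖(∑ i, (M i : ℂ) * α i) * τ - 2 * (Real.pi : ℂ) * (m : ℂ) * Complex.I‖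
        > c * ((∑ i, M i : ℕ) : ℝ) ^ (-ν)) :
    ∃ ν' > (0 : ℝ), ∀ M : Fin s → ℕ, M ≠ 0 →
      ‖∏ i, Complex.exp (α i * τ) ^ M i - 1‖
        > (2 : ℝ) ^ (-ν') * ((∑ i, M i : ℕ) : ℝ) ^ (-ν') ∧
      ‖∏ i, Complex.exp (α i * τ) ^ (-(M i : ℤ)) - 1‖
        > (2 : ℝ) ^ (-ν') * ((∑ i, M i : ℕ) : ℝ) ^ (-ν') := by
  set A : ℝ := max 0 (Real.logb 2 (16 / c)) with hAdef
  have hA0 : 0 ≤ A := le_max_left _ _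
  set ν' : ℝ := ν + A + 5 with hν'def
  have hν'pos : 0 < ν' := by positivity
  refine ⟨ν', hν'pos, fun M hM => ?_⟩
  -- basic facts about N
  set N : ℕ := ∑ i, M i with hNdef
  have hN1 : 1 ≤ (N : ℝ) := by
    have : N ≠ 0 := by
      intro h0
      apply hM
      funext i
      have := (Finset.sum_eq_zero_iff.mp h0) i (Finset.mem_univ i)
      simpa using this
    exact_mod_cast Nat.one_le_iff_ne_zero.mpr this
  set δ : ℝ := min (c * (N : ℝ) ^ (-ν)) 1 with hδdef
  have hδpos : 0 < δ := lt_min (by positivity) one_pos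
  have hδ1 : δ ≤ 1 := min_le_right _ _
  -- the numeric inequality
  have hnum : (2 : ℝ) ^ (-ν') * (N : ℝ) ^ (-ν') < δ / 16 := by
    have h2split : (2 : ℝ) ^ (-ν') = (2:ℝ) ^ (-ν) * (2:ℝ) ^ (-A) * (2:ℝ) ^ (-(5:ℝ)) := by
      rw [← Real.rpow_add two_pos, ← Real.rpow_add two_pos]
      congr 1; rw [hν'def]; ring
    have h2ν : (2:ℝ) ^ (-ν) ≤ 1 :=
      Real.rpow_le_one_of_one_le_of_nonpos one_le_two (by linarith)
    have h2A : (2:ℝ) ^ (-A) ≤ c / 16 := by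
      have h1 : (2:ℝ) ^ (-A) ≤ (2:ℝ) ^ (-(Real.logb 2 (16/c))) :=
        Real.rpow_le_rpow_of_exponent_le one_le_two (neg_le_neg (le_max_right _ _))
      have h2 : (2:ℝ) ^ (-(Real.logb 2 (16/c))) = c / 16 := by
        rw [Real.rpow_neg (by norm_num), Real.rpow_logb two_pos (by norm_num) (by positivity)]
        rw [inv_div]
      linarith
    have h25 : (2:ℝ) ^ (-(5:ℝ)) = 1 / 32 := by
      rw [show (-(5:ℝ)) = ((-5 : ℤ) : ℝ) by norm_num, Real.rpow_intCast]
      norm_num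
    have hNν' : (N:ℝ) ^ (-ν') ≤ (N:ℝ) ^ (-ν) :=
      Real.rpow_le_rpow_of_exponent_le hN1 (by rw [hν'def]; linarith)
    have hNν'1 : (N:ℝ) ^ (-ν') ≤ 1 :=
      Real.rpow_le_one_of_one_le_of_nonpos hN1 (by linarith)
    have hNνpos : (0:ℝ) < (N:ℝ) ^ (-ν) := by positivity
    have hNν'pos : (0:ℝ) < (N:ℝ) ^ (-ν') := by positivity
    rcases le_total (c * (N : ℝ) ^ (-ν)) 1 with hcase | hcase
    · have hδeq : δ = c * (N : ℝ) ^ (-ν) := min_eq_left hcase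
      rw [hδeq, h2split, h25]
      have hstep : (2:ℝ) ^ (-ν) * (2:ℝ) ^ (-A) * (1/32) * (N:ℝ) ^ (-ν')
          ≤ 1 * (c/16) * (1/32) * ((N:ℝ) ^ (-ν)) := by
        gcongr
      calc (2:ℝ) ^ (-ν) * (2:ℝ) ^ (-A) * (1/32) * (N:ℝ) ^ (-ν')
          ≤ 1 * (c/16) * (1/32) * ((N:ℝ) ^ (-ν)) := hstep
        _ < c * (N:ℝ) ^ (-ν) / 16 := by nlinarith
    · have hδeq : δ = 1 := min_eq_right hcase
      rw [hδeq]
      have h2ν' : (2:ℝ) ^ (-ν') ≤ (2:ℝ) ^ (-(5:ℝ)) :=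
        Real.rpow_le_rpow_of_exponent_le one_le_two (by rw [hν'def]; linarith)
      have h2pos : (0:ℝ) < (2:ℝ) ^ (-ν') := by positivity
      calc (2:ℝ) ^ (-ν') * (N:ℝ) ^ (-ν') ≤ (2:ℝ) ^ (-ν') * 1 := by
            exact mul_le_mul_of_nonneg_left hNν'1 (le_of_lt h2pos)
        _ = (2:ℝ) ^ (-ν') := mul_one _
        _ ≤ 1/32 := by rw [← h25]; exact h2ν'
        _ < 1/16 := by norm_num
  -- product identities
  set w : ℂ := (∑ i, (M i : ℂ) * α i) * τ with hwdef
  have hprod : ∏ i, Complex.exp (α i * τ) ^ M i = Complex.exp w := by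
    calc ∏ i, Complex.exp (α i * τ) ^ M i
        = ∏ i, Complex.exp ((M i : ℂ) * (α i * τ)) := by
          refine Finset.prod_congr rfl fun i _ => ?_
          rw [Complex.exp_nat_mul]
      _ = Complex.exp (∑ i, (M i : ℂ) * (α i * τ)) := (Complex.exp_sum _ _).symm
      _ = Complex.exp w := by
          rw [hwdef, Finset.sum_mul]
          congr 1
          exact Finset.sum_congr rfl fun i _ => (mul_assoc _ _ _).symm
  have hprodneg : ∏ i, Complex.exp (α i * τ) ^ (-(M i : ℤ)) = Complex.exp (-w) := by
    calc ∏ i, Complex.exp (α i * τ) ^ (-(M i : ℤ))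
        = ∏ i, Complex.exp (((-(M i : ℤ) : ℤ) : ℂ) * (α i * τ)) := by
          refine Finset.prod_congr rfl fun i _ => ?_
          rw [Complex.exp_int_mul]
      _ = Complex.exp (∑ i, ((-(M i : ℤ) : ℤ) : ℂ) * (α i * τ)) := (Complex.exp_sum _ _).symm
      _ = Complex.exp (-w) := by
          congr 1
          rw [hwdef, Finset.sum_mul, ← Finset.sum_neg_distrib]
          refine Finset.sum_congr rfl fun i _ => ?_
          push_cast
          ring
  have hkey1 : δ / 16 < ‖Complex.exp w - 1‖ := by
    refine key_est w δ hδpos hδ1 fun m => ?_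
    exact lt_of_le_of_lt (min_le_left _ _) (h M hM m)
  have hkey2 : δ / 16 < ‖Complex.exp (-w) - 1‖ := by
    refine key_est (-w) δ hδpos hδ1 fun m => ?_
    have h2 := h M hM (-m)
    have heq : ‖w - 2 * (Real.pi : ℂ) * ((-m : ℤ) : ℂ) * Complex.I‖
        = ‖-w - 2 * (Real.pi : ℂ) * (m : ℂ) * Complex.I‖ := by
      rw [← norm_neg (-w - 2 * (Real.pi : ℂ) * (m : ℂ) * Complex.I)]
      congr 1
      push_cast
      ring
    rw [heq] at h2
    exact lt_of_le_of_lt (min_le_left _ _) h2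
  rw [hprod, hprodneg]
  exact ⟨lt_trans hnum hkey1, lt_trans hnum hkey2⟩
end

section
/- Assume condition (M) with exponent ν > 0 holds, and let a be a nonzero complex number with Λq^m ≠ a for every multi-index m. Then for all multi-indices m > p one has min(ε_m(a), ε_p(a)) < (2^{ν+1}/|a|)·(|m|−|p|)^ν. -/
/-- `ε_m(a) = 1/|Λ q^m − a|`. -/
noncomputable def eps (s : ℕ) (Λ : ℂ) (q : Fin s → ℂ) (a : ℂ) (m : Fin s → ℕ) : ℝ :=
  1 / ‖Λ * ∏ i, q i ^ m i - a‖

/-- estimate (21) in the proof of Lemma 3 of the paper. -/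
theorem stmt3 (s : ℕ) (hs : 1 ≤ s) (Λ : ℂ) (hΛ : Λ ≠ 0) (q : Fin s → ℂ) (hq : ∀ i, q i ≠ 0)
    (ν : ℝ) (hν : 0 < ν)
    (hM : ∀ m : Fin s → ℕ, m ≠ 0 →
      ‖∏ i, q i ^ m i - 1‖ > (2 : ℝ) ^ (-ν) * ((∑ i, m i : ℕ) : ℝ) ^ (-ν) ∧
      ‖∏ i, q i ^ (-(m i : ℤ)) - 1‖ > (2 : ℝ) ^ (-ν) * ((∑ i, m i : ℕ) : ℝ) ^ (-ν))
    (a : ℂ) (ha : a ≠ 0) (hne : ∀ m : Fin s → ℕ, Λ * ∏ i, q i ^ m i ≠ a) :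
    ∀ m p : Fin s → ℕ, (∀ i, p i ≤ m i) → (∑ i, p i) < (∑ i, m i) →
      min (eps s Λ q a m) (eps s Λ q a p) <
        (2 : ℝ) ^ (ν + 1) / ‖a‖ *
          (((∑ i, m i : ℕ) : ℝ) - ((∑ i, p i : ℕ) : ℝ)) ^ ν := by
  intro m p hp hlt
  set d : Fin s → ℕ := fun i => m i - p i with hd
  have hdsum : (∑ i, d i) = (∑ i, m i) - (∑ i, p i) := by
    simp only [hd]
    rw [eq_tsub_iff_add_eq_of_le (Finset.sum_le_sum fun i _ => hp i),
      ← Finset.sum_add_distrib]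
    exact Finset.sum_congr rfl fun i _ => Nat.sub_add_cancel (hp i)
  have hdpos : 0 < ∑ i, d i := by omega
  have hdne : d ≠ 0 := by
    intro h
    rw [h] at hdpos; simp at hdpos
  set n : ℝ := ((∑ i, d i : ℕ) : ℝ) with hn
  have hnpos : (0:ℝ) < n := by rw [hn]; exact_mod_cast hdpos
  set A : ℂ := Λ * ∏ i, q i ^ m i - a with hA
  set B : ℂ := Λ * ∏ i, q i ^ p i - a with hB
  have hAne : A ≠ 0 := sub_ne_zero.mpr (hne m)
  have hBne : B ≠ 0 := sub_ne_zero.mpr (hne p)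
  set Q : ℂ := ∏ i, q i ^ d i with hQ
  have hQne : Q ≠ 0 := Finset.prod_ne_zero_iff.mpr fun i _ => pow_ne_zero _ (hq i)
  have hQm : (∏ i, q i ^ m i) = (∏ i, q i ^ p i) * Q := by
    rw [hQ, ← Finset.prod_mul_distrib]
    refine Finset.prod_congr rfl fun i _ => ?_
    rw [← pow_add]
    congr 1
    have := hp i; simp only [hd]; omega
  have hQ' : (∏ i, q i ^ (-(d i : ℤ))) = Q⁻¹ := by
    rw [hQ, ← Finset.prod_inv_distrib]
    exact Finset.prod_congr rfl fun i _ => by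
      rw [zpow_neg, zpow_natCast]
  obtain ⟨h1, h2⟩ := hM d hdne
  rw [hQ'] at h2
  rw [← hQ] at h1
  set c : ℝ := (2:ℝ) ^ (-ν) * n ^ (-ν) with hc
  have hcpos : 0 < c := mul_pos (Real.rpow_pos_of_pos two_pos _)
    (Real.rpow_pos_of_pos hnpos _)
  set M : ℝ := max (‖A‖) (‖B‖) with hM2
  -- key bound: |a| * c < 2 * M
  have hkey : ‖a‖ * c < 2 * M := by
    rcases le_total (‖Q‖) 1 with hQle | hQge
    · have hid : a * (Q - 1) = A - Q * B := by
        rw [hA, hB, hQm]; ring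
      have : ‖a * (Q - 1)‖ ≤ ‖A‖ + ‖Q‖ * ‖B‖ := by
        rw [hid]
        calc ‖A - Q * B‖ ≤ ‖A‖ + ‖Q * B‖ :=
              norm_sub_le _ _
          _ = ‖A‖ + ‖Q‖ * ‖B‖ := by rw [norm_mul]
      have h3 : ‖A‖ + ‖Q‖ * ‖B‖ ≤ 2 * M := by
        have : ‖Q‖ * ‖B‖ ≤ ‖B‖ := by
          nlinarith [norm_nonneg B, norm_nonneg Q]
        have hAM : ‖A‖ ≤ M := le_max_left _ _
        have hBM : ‖B‖ ≤ M := le_max_right _ _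
        linarith
      have hlt' : ‖a‖ * c < ‖a * (Q - 1)‖ := by
        rw [norm_mul]
        have := mul_lt_mul_of_pos_left h1 (norm_pos_iff.mpr ha)
        simpa [hc] using this
      linarith
    · have hQ'le : ‖Q⁻¹‖ ≤ 1 := by
        rw [norm_inv]
        exact inv_le_one_of_one_le₀ hQge
      have hid : a * (Q⁻¹ - 1) = B - Q⁻¹ * A := by
        rw [hA, hB, hQm]
        field_simp
        ring
      have : ‖a * (Q⁻¹ - 1)‖ ≤ ‖B‖ + ‖Q⁻¹‖ * ‖A‖ := by
        rw [hid]
        calc ‖B - Q⁻¹ * A‖ ≤ ‖B‖ + ‖Q⁻¹ * A‖ :=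
              norm_sub_le _ _
          _ = ‖B‖ + ‖Q⁻¹‖ * ‖A‖ := by rw [norm_mul]
      have h3 : ‖B‖ + ‖Q⁻¹‖ * ‖A‖ ≤ 2 * M := by
        have : ‖Q⁻¹‖ * ‖A‖ ≤ ‖A‖ := by
          nlinarith [norm_nonneg A, norm_nonneg Q⁻¹]
        have hAM : ‖A‖ ≤ M := le_max_left _ _
        have hBM : ‖B‖ ≤ M := le_max_right _ _
        linarith
      have hlt' : ‖a‖ * c < ‖a * (Q⁻¹ - 1)‖ := by
        rw [norm_mul]
        have := mul_lt_mul_of_pos_left h2 (norm_pos_iff.mpr ha)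
        simpa [hc] using this
      linarith
  have hMpos : 0 < M := lt_of_lt_of_le (norm_pos_iff.mpr hAne) (le_max_left _ _)
  have hmin : min (eps s Λ q a m) (eps s Λ q a p) ≤ 1 / M := by
    rcases max_cases (‖A‖) (‖B‖) with ⟨hEq, _⟩ | ⟨hEq, _⟩
    · calc min (eps s Λ q a m) (eps s Λ q a p) ≤ eps s Λ q a m := min_le_left _ _
        _ = 1 / M := by rw [eps, hM2, hEq]
    · calc min (eps s Λ q a m) (eps s Λ q a p) ≤ eps s Λ q a p := min_le_right _ _
        _ = 1 / M := by rw [eps, hM2, hEq]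
  have hgoalRHS : (2 : ℝ) ^ (ν + 1) / ‖a‖ *
      (((∑ i, m i : ℕ) : ℝ) - ((∑ i, p i : ℕ) : ℝ)) ^ ν
      = 2 / (‖a‖ * c) := by
    have hnm : ((∑ i, m i : ℕ) : ℝ) - ((∑ i, p i : ℕ) : ℝ) = n := by
      rw [hn, hdsum]
      push_cast [Nat.cast_sub (le_of_lt hlt)]
      ring
    rw [hnm, hc]
    rw [Real.rpow_add two_pos, Real.rpow_one, Real.rpow_neg (le_of_lt two_pos),
      Real.rpow_neg (le_of_lt hnpos)]
    have h2ν : (0:ℝ) < (2:ℝ) ^ ν := Real.rpow_pos_of_pos two_pos _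
    have hnν : (0:ℝ) < n ^ ν := Real.rpow_pos_of_pos hnpos _
    field_simp
  rw [hgoalRHS]
  calc min (eps s Λ q a m) (eps s Λ q a p) ≤ 1 / M := hmin
    _ < 2 / (‖a‖ * c) := by
        rw [div_lt_div_iff₀ hMpos (mul_pos (norm_pos_iff.mpr ha) hcpos)]
        linarith
end

section
/- Assume condition (M) with exponent ν > 0 holds, and let a be a complex number with Λq^m ≠ a for every multi-index m. Then for all multi-indices m > p one has both (|q₁|^{m₁}⋯|q_s|^{m_s})·min(ε_m(a), ε_p(a)) < (2^{ν+1}/|Λ|)·(|m|−|p|)^ν and (|q₁|^{p₁}⋯|q_s|^{p_s})·min(ε_m(a), ε_p(a)) < (2^{ν+1}/|Λ|)·(|m|−|p|)^ν. -/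
private lemma key_ineq (L Q x e M0 : ℝ) (hL : 0 < L) (hQ : 0 < Q) (he : 0 < e) (hx : e < x)
    (hM0 : 0 < M0) (hAB : L * Q * x ≤ 2 * M0) : Q * (1 / M0) < 2 / (L * e) := by
  have hx0 : 0 < x := he.trans hx
  have h1 : Q * (1 / M0) ≤ 2 / (L * x) := by
    rw [mul_one_div, div_le_div_iff₀ hM0 (by positivity)]
    nlinarith
  have h2 : 2 / (L * x) < 2 / (L * e) := by
    apply div_lt_div_of_pos_left two_pos (by positivity)
    exact mul_lt_mul_of_pos_left hx hL
  linarith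

/-- estimates (22) and (23) in the proof of Lemma 3 of the paper. -/
theorem stmt4 (s : ℕ) (hs : 1 ≤ s) (Λ : ℂ) (hΛ : Λ ≠ 0) (q : Fin s → ℂ) (hq : ∀ i, q i ≠ 0)
    (ν : ℝ) (hν : 0 < ν)
    (hM : ∀ m : Fin s → ℕ, m ≠ 0 →
      ‖∏ i, q i ^ m i - 1‖ > (2 : ℝ) ^ (-ν) * ((∑ i, m i : ℕ) : ℝ) ^ (-ν) ∧
      ‖∏ i, q i ^ (-(m i : ℤ)) - 1‖ > (2 : ℝ) ^ (-ν) * ((∑ i, m i : ℕ) : ℝ) ^ (-ν))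
    (a : ℂ) (hne : ∀ m : Fin s → ℕ, Λ * ∏ i, q i ^ m i ≠ a) :
    ∀ m p : Fin s → ℕ, (∀ i, p i ≤ m i) → (∑ i, p i) < (∑ i, m i) →
      (∏ i, ‖q i‖ ^ m i) * min (eps s Λ q a m) (eps s Λ q a p) <
        (2 : ℝ) ^ (ν + 1) / ‖Λ‖ *
          (((∑ i, m i : ℕ) : ℝ) - ((∑ i, p i : ℕ) : ℝ)) ^ ν ∧
      (∏ i, ‖q i‖ ^ p i) * min (eps s Λ q a m) (eps s Λ q a p) <
        (2 : ℝ) ^ (ν + 1) / ‖Λ‖ *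
          (((∑ i, m i : ℕ) : ℝ) - ((∑ i, p i : ℕ) : ℝ)) ^ ν := by
  intro m p hle hlt
  set d : Fin s → ℕ := fun i => m i - p i with hd
  have hdp : ∀ i, p i + d i = m i := fun i => Nat.add_sub_cancel' (hle i)
  have hsumd : (∑ i, d i) + (∑ i, p i) = ∑ i, m i := by
    rw [← Finset.sum_add_distrib]
    exact Finset.sum_congr rfl fun i _ => by rw [add_comm]; exact hdp i
  have hd0 : d ≠ 0 := by
    intro h
    rw [h] at hsumd
    simp at hsumd
    omega
  obtain ⟨h22, h23⟩ := hM d hd0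
  -- Notation
  set Qm : ℂ := ∏ i, q i ^ m i with hQm
  set Qp : ℂ := ∏ i, q i ^ p i with hQp
  set Qd : ℂ := ∏ i, q i ^ d i with hQd
  have hQmne : Qm ≠ 0 := Finset.prod_ne_zero_iff.mpr fun i _ => pow_ne_zero _ (hq i)
  have hQpne : Qp ≠ 0 := Finset.prod_ne_zero_iff.mpr fun i _ => pow_ne_zero _ (hq i)
  have hQdne : Qd ≠ 0 := Finset.prod_ne_zero_iff.mpr fun i _ => pow_ne_zero _ (hq i)
  have hsplit : Qm = Qp * Qd := by
    rw [hQm, hQp, hQd, ← Finset.prod_mul_distrib]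
    exact Finset.prod_congr rfl fun i _ => by rw [← pow_add, hdp i]
  have hQinv : (∏ i, q i ^ (-(d i : ℤ))) = Qd⁻¹ := by
    rw [hQd, ← Finset.prod_inv_distrib]
    exact Finset.prod_congr rfl fun i _ => by
      rw [zpow_neg, zpow_natCast]
  rw [hQinv] at h23
  -- A, B
  set A : ℂ := Λ * Qm - a with hA
  set B : ℂ := Λ * Qp - a with hB
  have hAne : A ≠ 0 := sub_ne_zero.mpr (hne m)
  have hBne : B ≠ 0 := sub_ne_zero.mpr (hne p)
  have hApos : 0 < ‖A‖ := by simpa using hAne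
  have hBpos : 0 < ‖B‖ := by simpa using hBne
  set M0 : ℝ := max (‖A‖) (‖B‖) with hM0def
  have hM0pos : 0 < M0 := lt_max_of_lt_left hApos
  have hminle : min (eps s Λ q a m) (eps s Λ q a p) ≤ 1 / M0 := by
    rcases max_cases (‖A‖) (‖B‖) with ⟨h, _⟩ | ⟨h, _⟩
    · exact le_trans (min_le_left _ _) (by rw [eps, ← hQm, ← hA, hM0def, h])
    · exact le_trans (min_le_right _ _) (by rw [eps, ← hQp, ← hB, hM0def, h])
  have hminpos : 0 < min (eps s Λ q a m) (eps s Λ q a p) := by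
    apply lt_min <;> · rw [eps]; positivity
  -- |A - B|
  have hABle : ‖A - B‖ ≤ 2 * M0 := by
    calc ‖A - B‖ ≤ ‖A‖ + ‖B‖ := by
          simpa using norm_sub_le A B
      _ ≤ 2 * M0 := by
          have := le_max_left (‖A‖) (‖B‖)
          have := le_max_right (‖A‖) (‖B‖)
          linarith
  have hABm : ‖A - B‖ = ‖Λ‖ * ‖Qm‖ * ‖Qd⁻¹ - 1‖ := by
    have : A - B = Λ * Qm * (Qd⁻¹ - 1) * (-1) := by
      rw [hA, hB, hsplit]
      field_simp
      ring
    rw [this]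
    simp [map_mul]
  have hABp : ‖A - B‖ = ‖Λ‖ * ‖Qp‖ * ‖Qd - 1‖ := by
    have : A - B = Λ * Qp * (Qd - 1) := by rw [hA, hB, hsplit]; ring
    rw [this]; simp [map_mul]
  -- casts and positivity of N
  set N : ℝ := ((∑ i, d i : ℕ) : ℝ) with hN
  have hNcast : N = ((∑ i, m i : ℕ) : ℝ) - ((∑ i, p i : ℕ) : ℝ) := by
    rw [hN, ← hsumd]; push_cast; ring
  have hNpos : 0 < N := by
    rw [hNcast]
    have : (∑ i, p i) < (∑ i, m i) := hlt
    have := Nat.cast_lt (α := ℝ) |>.mpr this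
    linarith
  set e : ℝ := (2 : ℝ) ^ (-ν) * N ^ (-ν) with he
  have hepos : 0 < e := by
    rw [he]; positivity
  have hRHS : (2 : ℝ) ^ (ν + 1) / ‖Λ‖ *
      (((∑ i, m i : ℕ) : ℝ) - ((∑ i, p i : ℕ) : ℝ)) ^ ν = 2 / (‖Λ‖ * e) := by
    rw [← hNcast, he, Real.rpow_add two_pos, Real.rpow_one,
      Real.rpow_neg (by norm_num : (0:ℝ) ≤ 2), Real.rpow_neg hNpos.le]
    have h2 : (0:ℝ) < (2:ℝ) ^ ν := Real.rpow_pos_of_pos two_pos ν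
    have h3 : (0:ℝ) < N ^ ν := Real.rpow_pos_of_pos hNpos ν
    have hΛa : (0:ℝ) < ‖Λ‖ := by simpa using hΛ
    field_simp
  have hΛpos : 0 < ‖Λ‖ := by simpa using hΛ
  have hQmpos : 0 < ‖Qm‖ := by simpa using hQmne
  have hQppos : 0 < ‖Qp‖ := by simpa using hQpne
  have hprodm : (∏ i, ‖q i‖ ^ m i) = ‖Qm‖ := by
    rw [hQm, norm_prod]; exact Finset.prod_congr rfl fun i _ => (norm_pow _ _).symm
  have hprodp : (∏ i, ‖q i‖ ^ p i) = ‖Qp‖ := by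
    rw [hQp, norm_prod]; exact Finset.prod_congr rfl fun i _ => (norm_pow _ _).symm
  rw [hRHS, hprodm, hprodp]
  constructor
  · calc ‖Qm‖ * min (eps s Λ q a m) (eps s Λ q a p)
        ≤ ‖Qm‖ * (1 / M0) := by
          exact mul_le_mul_of_nonneg_left hminle hQmpos.le
      _ < 2 / (‖Λ‖ * e) := by
          apply key_ineq _ _ _ _ _ hΛpos hQmpos hepos h23 hM0pos
          calc ‖Λ‖ * ‖Qm‖ * ‖Qd⁻¹ - 1‖
              = ‖A - B‖ := hABm.symm
            _ ≤ 2 * M0 := hABle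
  · calc ‖Qp‖ * min (eps s Λ q a m) (eps s Λ q a p)
        ≤ ‖Qp‖ * (1 / M0) := by
          exact mul_le_mul_of_nonneg_left hminle hQppos.le
      _ < 2 / (‖Λ‖ * e) := by
          apply key_ineq _ _ _ _ _ hΛpos hQppos hepos h22 hM0pos
          calc ‖Λ‖ * ‖Qp‖ * ‖Qd - 1‖
              = ‖A - B‖ := hABp.symm
            _ ≤ 2 * M0 := hABle
end

section
/- Assume condition (M) with exponent ν > 0 holds, and let a be a nonzero complex number with Λq^m ≠ a for every multi-index m. Then there exists ν′ > 0 such that for all multi-indices m > p one has s_m·min(ε_m(a), ε_p(a)) < 2^{ν′+1}·(|m|−|p|)^{ν′} and s_p·min(ε_m(a), ε_p(a)) < 2^{ν′+1}·(|m|−|p|)^{ν′}. -/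
/-- `s_m = max(1, |q₁|^{m₁}⋯|q_s|^{m_s})`. -/
noncomputable def smax (s : ℕ) (q : Fin s → ℂ) (m : Fin s → ℕ) : ℝ :=
  max 1 (∏ i, ‖q i‖ ^ m i)

open Real in
lemma aux_real (ν k L α Q AM AP : ℝ) (hν : 0 < ν) (hk : 1 ≤ k) (hL : 0 < L) (hα : 0 < α)
    (hQ : 0 < Q) (hAM : 0 < AM) (hAP : 0 < AP)
    (hD : L * Q * ((2:ℝ)^(-ν) * k^(-ν)) ≤ AM + AP)
    (hAMa : α - L * Q ≤ AM) :
    max 1 Q * min (1/AM) (1/AP) ≤ ((2:ℝ)^(ν+2) * max (1/L) (1/α)) * k^ν := by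
  have hk0 : (0:ℝ) < k := lt_of_lt_of_le one_pos hk
  set t : ℝ := (2:ℝ)^ν with ht
  set u : ℝ := k^ν with hu
  have ht0 : 0 < t := rpow_pos_of_pos two_pos ν
  have hu0 : 0 < u := rpow_pos_of_pos hk0 ν
  have ht1 : 1 ≤ t := by
    rw [ht]; calc (1:ℝ) = (2:ℝ)^(0:ℝ) := (rpow_zero 2).symm
    _ ≤ (2:ℝ)^ν := rpow_le_rpow_of_exponent_le one_le_two hν.le
  have hu1 : 1 ≤ u := by
    rw [hu]; calc (1:ℝ) = k^(0:ℝ) := (rpow_zero k).symm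
    _ ≤ k^ν := rpow_le_rpow_of_exponent_le hk hν.le
  have h2n : (2:ℝ)^(-ν) = t⁻¹ := by rw [ht, ← rpow_neg_one, ← rpow_mul two_pos.le]; ring_nf
  have hkn : k^(-ν) = u⁻¹ := by rw [hu, ← rpow_neg_one, ← rpow_mul hk0.le]; ring_nf
  have h2p : (2:ℝ)^(ν+2) = 4*t := by
    rw [rpow_add two_pos, ht]; norm_num; ring
  rw [h2n, hkn] at hD
  rw [h2p]
  have hMx : 0 < max AM AP := lt_max_of_lt_left hAM
  have hmin : min (1/AM) (1/AP) = 1 / max AM AP := by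
    rcases le_total AM AP with h|h
    · rw [max_eq_right h, min_eq_right (one_div_le_one_div_of_le hAM h)]
    · rw [max_eq_left h, min_eq_left (one_div_le_one_div_of_le hAP h)]
  rw [hmin, mul_one_div, div_le_iff₀ hMx]
  have hDM : L * Q * (t⁻¹ * u⁻¹) ≤ 2 * max AM AP := by
    refine hD.trans ?_
    have := le_max_left AM AP; have := le_max_right AM AP; linarith
  rcases le_total 1 Q with h1 | h1
  · rw [max_eq_right h1]
    have hmax : 1/L ≤ max (1/L) (1/α) := le_max_left _ _
    have key : Q ≤ 2 * t * u * (1/L) * max AM AP := by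
      have h2 : L * Q ≤ 2 * max AM AP * t * u := by
        have := mul_le_mul_of_nonneg_right hDM (by positivity : (0:ℝ) ≤ t*u)
        calc L * Q = L * Q * (t⁻¹ * u⁻¹) * (t * u) := by field_simp
        _ ≤ 2 * max AM AP * (t*u) := this
        _ = 2 * max AM AP * t * u := by ring
      calc Q = (L * Q) * (1/L) := by field_simp
      _ ≤ (2 * max AM AP * t * u) * (1/L) := by
          apply mul_le_mul_of_nonneg_right h2; positivity
      _ = 2 * t * u * (1/L) * max AM AP := by ring
    refine key.trans ?_
    have : 2 * t * u * (1/L) ≤ 4 * t * max (1/L) (1/α) * u := by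
      nlinarith [mul_le_mul_of_nonneg_left hmax (by positivity : (0:ℝ) ≤ 2*t*u)]
    nlinarith
  · rw [max_eq_left h1]
    rcases le_total (2*L*Q) α with h2 | h2
    · -- AM ≥ α/2
      have hAM2 : α/2 ≤ max AM AP := by
        have : α/2 ≤ AM := by nlinarith
        exact le_trans this (le_max_left _ _)
      have hmax : 1/α ≤ max (1/L) (1/α) := le_max_right _ _
      have : (2/α) * (α/2) ≤ 4 * t * max (1/L) (1/α) * u * max AM AP := by
        apply mul_le_mul _ hAM2 (by positivity) (by positivity)
        have hmax0 : (0:ℝ) < max (1/L) (1/α) := lt_of_lt_of_le (by positivity) hmax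
        have htu : (1:ℝ) ≤ t * u := by nlinarith
        calc 2/α = 2 * (1/α) := by ring
        _ ≤ 2 * max (1/L) (1/α) := by linarith
        _ ≤ 4 * t * max (1/L) (1/α) * u := by nlinarith [mul_le_mul_of_nonneg_right htu hmax0.le]
      calc (1:ℝ) = (2/α) * (α/2) := by field_simp
      _ ≤ _ := this
    · -- α < 2LQ, use hDM
      have hmax : 1/α ≤ max (1/L) (1/α) := le_max_right _ _
      have hM2 : α * (t⁻¹ * u⁻¹) ≤ 2 * (2 * max AM AP) := by
        calc α * (t⁻¹*u⁻¹) ≤ 2*(L*Q) * (t⁻¹*u⁻¹) := by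
              apply mul_le_mul_of_nonneg_right (by linarith) (by positivity)
        _ = 2 * (L*Q*(t⁻¹*u⁻¹)) := by ring
        _ ≤ 2 * (2 * max AM AP) := by linarith
      -- so 1 ≤ 4 * t * u * (1/α) * max AM AP
      have : 1 ≤ 4 * t * (1/α) * u * max AM AP := by
        have h3 : α ≤ 4 * max AM AP * t * u := by
          have := mul_le_mul_of_nonneg_right hM2 (by positivity : (0:ℝ) ≤ t*u)
          calc α = α * (t⁻¹*u⁻¹) * (t*u) := by field_simp
          _ ≤ 2*(2*max AM AP) * (t*u) := this
          _ = 4 * max AM AP * t * u := by ring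
        calc (1:ℝ) = α * (1/α) := by field_simp
        _ ≤ (4 * max AM AP * t * u) * (1/α) := by
            apply mul_le_mul_of_nonneg_right h3; positivity
        _ = 4 * t * (1/α) * u * max AM AP := by ring
      refine this.trans ?_
      have h4 : 4 * t * (1/α) ≤ 4 * t * max (1/L) (1/α) := by
        apply mul_le_mul_of_nonneg_left hmax (by positivity)
      calc 4 * t * (1/α) * u * (max AM AP)
          = (4 * t * (1/α)) * (u * max AM AP) := by ring
        _ ≤ (4 * t * max (1/L) (1/α)) * (u * max AM AP) := by
            apply mul_le_mul_of_nonneg_right h4 (by positivity)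
        _ = 4 * t * max (1/L) (1/α) * u * max AM AP := by ring

/-- Lemma 3 of the paper. -/
theorem stmt5 (s : ℕ) (hs : 1 ≤ s) (Λ : ℂ) (hΛ : Λ ≠ 0) (q : Fin s → ℂ) (hq : ∀ i, q i ≠ 0)
    (ν : ℝ) (hν : 0 < ν)
    (hM : ∀ m : Fin s → ℕ, m ≠ 0 →
      ‖∏ i, q i ^ m i - 1‖ > (2 : ℝ) ^ (-ν) * ((∑ i, m i : ℕ) : ℝ) ^ (-ν) ∧
      ‖∏ i, q i ^ (-(m i : ℤ)) - 1‖ > (2 : ℝ) ^ (-ν) * ((∑ i, m i : ℕ) : ℝ) ^ (-ν))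
    (a : ℂ) (ha : a ≠ 0) (hne : ∀ m : Fin s → ℕ, Λ * ∏ i, q i ^ m i ≠ a) :
    ∃ ν' > (0 : ℝ), ∀ m p : Fin s → ℕ, (∀ i, p i ≤ m i) → (∑ i, p i) < (∑ i, m i) →
      smax s q m * min (eps s Λ q a m) (eps s Λ q a p) <
        (2 : ℝ) ^ (ν' + 1) * (((∑ i, m i : ℕ) : ℝ) - ((∑ i, p i : ℕ) : ℝ)) ^ ν' ∧
      smax s q p * min (eps s Λ q a m) (eps s Λ q a p) <
        (2 : ℝ) ^ (ν' + 1) * (((∑ i, m i : ℕ) : ℝ) - ((∑ i, p i : ℕ) : ℝ)) ^ ν' := by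
  have hL : 0 < ‖Λ‖ := norm_pos_iff.mpr hΛ
  have hα : 0 < ‖a‖ := norm_pos_iff.mpr ha
  set C : ℝ := (2:ℝ)^(ν+2) * max (1/‖Λ‖) (1/‖a‖) with hCdef
  have hC0 : 0 < C := by
    apply mul_pos (Real.rpow_pos_of_pos two_pos _)
    exact lt_max_of_lt_left (one_div_pos.mpr hL)
  set ν' : ℝ := max ν (Real.logb 2 C) + 1 with hν'def
  have hνν' : ν ≤ ν' := le_trans (le_max_left _ _) (by linarith)
  have hν'0 : 0 < ν' := lt_of_lt_of_le hν hνν'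
  have hClt : C < (2:ℝ)^(ν'+1) := by
    have h1 : Real.logb 2 C + 1 ≤ ν' + 1 := by
      have := le_max_right ν (Real.logb 2 C); linarith
    calc C = (2:ℝ) ^ Real.logb 2 C := (Real.rpow_logb two_pos (by norm_num) hC0).symm
    _ < (2:ℝ) ^ (Real.logb 2 C + 1) := by
        apply Real.rpow_lt_rpow_of_exponent_lt one_lt_two; linarith
    _ ≤ (2:ℝ) ^ (ν'+1) := Real.rpow_le_rpow_of_exponent_le one_le_two h1
  refine ⟨ν', hν'0, fun m p hle hlt => ?_⟩
  -- setup
  set Qm : ℂ := ∏ i, q i ^ m i with hQm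
  set Qp : ℂ := ∏ i, q i ^ p i with hQp
  set d : Fin s → ℕ := fun i => m i - p i with hdd
  have hmd : ∀ i, m i = p i + d i := fun i => by have := hle i; simp only [hdd]; omega
  set Qd : ℂ := ∏ i, q i ^ d i with hQd
  have hQmQ : Qm = Qp * Qd := by
    rw [hQm, hQp, hQd, ← Finset.prod_mul_distrib]
    exact Finset.prod_congr rfl fun i _ => by rw [← pow_add, ← hmd i]
  have hQd0 : Qd ≠ 0 := Finset.prod_ne_zero_iff.mpr fun i _ => pow_ne_zero _ (hq i)
  have hQm0 : Qm ≠ 0 := Finset.prod_ne_zero_iff.mpr fun i _ => pow_ne_zero _ (hq i)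
  have hQp0 : Qp ≠ 0 := Finset.prod_ne_zero_iff.mpr fun i _ => pow_ne_zero _ (hq i)
  have hsum : (∑ i, m i) = (∑ i, p i) + ∑ i, d i := by
    rw [← Finset.sum_add_distrib]; exact Finset.sum_congr rfl fun i _ => hmd i
  have hd0 : d ≠ 0 := by
    intro h
    rw [h] at hsum; simp at hsum; omega
  set k : ℕ := ∑ i, d i with hk
  have hk1 : 1 ≤ k := by omega
  have hkR : ((∑ i, m i : ℕ) : ℝ) - ((∑ i, p i : ℕ) : ℝ) = (k:ℝ) := by
    rw [hsum]; push_cast; ring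
  have hk1R : (1:ℝ) ≤ (k:ℝ) := by exact_mod_cast hk1
  obtain ⟨hM1, hM2⟩ := hM d hd0
  have hQdinv : (∏ i, q i ^ (-(d i:ℤ))) = Qd⁻¹ := by
    rw [hQd, ← Finset.prod_inv_distrib]
    exact Finset.prod_congr rfl fun i _ => by rw [zpow_neg, zpow_natCast]
  rw [hQdinv] at hM2
  -- abs values
  set AM : ℝ := ‖Λ * Qm - a‖ with hAM
  set AP : ℝ := ‖Λ * Qp - a‖ with hAP
  have hAM0 : 0 < AM := norm_pos_iff.mpr (sub_ne_zero.mpr (hne m))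
  have hAP0 : 0 < AP := norm_pos_iff.mpr (sub_ne_zero.mpr (hne p))
  have htri : ∀ x y : ℂ, ‖x - y‖ ≤ ‖x‖ + ‖y‖ := by
    intro x y
    calc ‖x - y‖ = ‖x + (-y)‖ := by ring_nf
    _ ≤ ‖x‖ + ‖-y‖ := norm_add_le _ _
    _ = ‖x‖ + ‖y‖ := by rw [norm_neg]
  have habs : ∀ z w : ℂ, ‖w‖ - ‖z‖ ≤ ‖z - w‖ := by
    intro z w
    have := norm_sub_norm_le w z
    rw [norm_sub_rev] at this
    simpa using this
  have hDtri : ‖(Λ * Qm - a) - (Λ * Qp - a)‖ ≤ AM + AP := htri _ _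
  -- two expressions for the difference
  have hdiff1 : (Λ * Qm - a) - (Λ * Qp - a) = Λ * Qp * (Qd - 1) := by
    rw [hQmQ]; ring
  have hdiff2 : (Λ * Qm - a) - (Λ * Qp - a) = -(Λ * Qm * (Qd⁻¹ - 1)) := by
    rw [hQmQ]; field_simp; ring
  have hDm : ‖Λ‖ * ‖Qm‖ * ((2:ℝ)^(-ν) * (k:ℝ)^(-ν)) ≤ AM + AP := by
    refine le_trans ?_ hDtri
    rw [hdiff2, norm_neg, norm_mul, norm_mul]
    apply mul_le_mul_of_nonneg_left hM2.le (by positivity)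
  have hDp : ‖Λ‖ * ‖Qp‖ * ((2:ℝ)^(-ν) * (k:ℝ)^(-ν)) ≤ AM + AP := by
    refine le_trans ?_ hDtri
    rw [hdiff1, norm_mul, norm_mul]
    apply mul_le_mul_of_nonneg_left hM1.le (by positivity)
  have hAMa : ‖a‖ - ‖Λ‖ * ‖Qm‖ ≤ AM := by
    rw [hAM, ← norm_mul]; exact habs _ _
  have hAPa : ‖a‖ - ‖Λ‖ * ‖Qp‖ ≤ AP := by
    rw [hAP, ← norm_mul]; exact habs _ _
  have hepsm : eps s Λ q a m = 1/AM := rfl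
  have hepsp : eps s Λ q a p = 1/AP := rfl
  have hsmaxm : smax s q m = max 1 (‖Qm‖) := by
    rw [smax, hQm, norm_prod]
    congr 1
    exact Finset.prod_congr rfl fun i _ => (norm_pow _ _).symm
  have hsmaxp : smax s q p = max 1 (‖Qp‖) := by
    rw [smax, hQp, norm_prod]
    congr 1
    exact Finset.prod_congr rfl fun i _ => (norm_pow _ _).symm
  have keym := aux_real ν (k:ℝ) (‖Λ‖) (‖a‖) (‖Qm‖) AM AP
    hν hk1R hL hα (norm_pos_iff.mpr hQm0) hAM0 hAP0 hDm hAMa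
  have keyp : max 1 (‖Qp‖) * min (1/AM) (1/AP) ≤ C * (k:ℝ)^ν := by
    have h := aux_real ν (k:ℝ) (‖Λ‖) (‖a‖) (‖Qp‖) AP AM
      hν hk1R hL hα (norm_pos_iff.mpr hQp0) hAP0 hAM0 (by linarith) hAPa
    rwa [min_comm] at h
  have hfinal : C * (k:ℝ)^ν < (2:ℝ)^(ν'+1) * (k:ℝ)^ν' := by
    have hkpos : (0:ℝ) < (k:ℝ) := by linarith
    calc C * (k:ℝ)^ν ≤ C * (k:ℝ)^ν' := by
          apply mul_le_mul_of_nonneg_left (Real.rpow_le_rpow_of_exponent_le hk1R hνν') hC0.le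
    _ < (2:ℝ)^(ν'+1) * (k:ℝ)^ν' := by
          apply mul_lt_mul_of_pos_right hClt (Real.rpow_pos_of_pos hkpos _)
  rw [hkR, hepsm, hepsp, hsmaxm, hsmaxp]
  exact ⟨lt_of_le_of_lt keym hfinal, lt_of_le_of_lt keyp hfinal⟩
end

section
/- Let a be a nonzero complex number, ν > 0, and assume conditions (S1)–(S2) and condition (E) for a with exponent ν hold. Set N₁ = 2^{2ν+1}. Then for every integer r ≥ 0 and every chain of multi-indices m^(0) > m^(1) > ⋯ > m^(r) with m^(r) nonzero, one has ∏_{i=0}^{r} s_{m^(i)}·ε_{m^(i)}(a) < N₁^{r+1}·|m^(0)|^ν·∏_{i=1}^{r} (|m^(i−1)|−|m^(i)|)^ν. -/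
namespace Stmt7


def Rel (s : ℕ) (x y : Fin s → ℕ) : Prop := (∀ i, y i ≤ x i) ∧ (∑ i, y i) < (∑ i, x i)

lemma Rel.trans' {s : ℕ} {x y z : Fin s → ℕ} (h1 : Rel s x y) (h2 : Rel s y z) : Rel s x z :=
  ⟨fun i => (h2.1 i).trans (h1.1 i), h2.2.trans h1.2⟩

noncomputable def gl (s : ℕ) (ν : ℝ) (x y : Fin s → ℕ) : ℝ :=
  (2:ℝ) ^ (2*ν+1) * (((∑ i, x i : ℕ) : ℝ) - ((∑ i, y i : ℕ) : ℝ)) ^ ν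

noncomputable def gpL (s : ℕ) (ν : ℝ) : List (Fin s → ℕ) → ℝ
  | [] => 1
  | [_] => 1
  | x :: y :: l => gl s ν x y * gpL s ν (y :: l)

lemma one_le_gap {s : ℕ} {x y : Fin s → ℕ} (h : Rel s x y) :
    1 ≤ ((∑ i, x i : ℕ) : ℝ) - ((∑ i, y i : ℕ) : ℝ) := by
  have h2 := h.2
  rw [le_sub_iff_add_le]
  have : (∑ i, y i) + 1 ≤ ∑ i, x i := h2
  calc (1:ℝ) + ((∑ i, y i : ℕ):ℝ) = (((∑ i, y i) + 1 : ℕ) : ℝ) := by push_cast; ring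
  _ ≤ _ := by exact_mod_cast this

lemma gl_pos {s : ℕ} {ν : ℝ} {x y : Fin s → ℕ} (h : Rel s x y) : 0 < gl s ν x y := by
  have := one_le_gap h
  unfold gl
  positivity

lemma gpL_pos {s : ℕ} {ν : ℝ} : ∀ {l : List (Fin s → ℕ)}, List.Chain' (Rel s) l → 0 < gpL s ν l
  | [], _ => by simp [gpL]
  | [_], _ => by simp [gpL]
  | x :: y :: l, h => by
      obtain ⟨h1, h2⟩ := List.isChain_cons_cons.mp h
      exact mul_pos (gl_pos h1) (gpL_pos h2)

lemma gpL_append {s : ℕ} {ν : ℝ} :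
    ∀ (A : List (Fin s → ℕ)) (h : A ≠ []) (z : Fin s → ℕ) (B : List (Fin s → ℕ)),
      gpL s ν (A ++ z :: B) = gpL s ν A * gl s ν (A.getLast h) z * gpL s ν (z :: B)
  | [], h, _, _ => absurd rfl h
  | [a], _, z, B => by simp [gpL]
  | a :: b :: A', _, z, B => by
      have ih := gpL_append (ν := ν) (b :: A') (List.cons_ne_nil _ _) z B
      simp only [List.cons_append, List.append_eq, gpL] at *
      rw [ih, List.getLast_cons (List.cons_ne_nil _ _)]
      ring



lemma nonzero_of_sum {s : ℕ} {m : Fin s → ℕ} (hm : 0 < ∑ i, m i) : m ≠ 0 := by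
  intro h
  rw [h] at hm
  simp at hm

lemma eps_pos {s : ℕ} (Λ : ℂ) (q : Fin s → ℂ) (a : ℂ) {ν : ℝ}
    (hS1 : ∀ m : Fin s → ℕ, m ≠ 0 →
      ‖Λ * ∏ i, q i ^ m i - a‖ > (2 : ℝ) ^ (-ν) * ((∑ i, m i : ℕ) : ℝ) ^ (-ν))
    {m : Fin s → ℕ} (hm : 0 < ∑ i, m i) : 0 < eps s Λ q a m := by
  have hb : (0:ℝ) < (2 : ℝ) ^ (-ν) * ((∑ i, m i : ℕ) : ℝ) ^ (-ν) := by
    have : (0:ℝ) < ((∑ i, m i : ℕ) : ℝ) := by exact_mod_cast hm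
    positivity
  have := hS1 m (nonzero_of_sum hm)
  have hD : 0 < ‖Λ * ∏ i, q i ^ m i - a‖ := hb.trans this
  exact div_pos one_pos hD

lemma inv_bound {ν S D : ℝ} (hS : 0 < S) (h : (2 : ℝ) ^ (-ν) * S ^ (-ν) < D) :
    1 / D < 2 ^ ν * S ^ ν := by
  have e1 : (2:ℝ) ^ (-ν) * S ^ (-ν) = (2 ^ ν * S ^ ν)⁻¹ := by
    rw [Real.rpow_neg (by norm_num), Real.rpow_neg hS.le, mul_inv]
  rw [e1] at h
  have hpos : (0:ℝ) < (2 ^ ν * S ^ ν)⁻¹ := by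
    have h2 : (0:ℝ) < 2 ^ ν := Real.rpow_pos_of_pos (by norm_num) ν
    have h3 : (0:ℝ) < S ^ ν := Real.rpow_pos_of_pos hS ν
    positivity
  have := one_div_lt_one_div_of_lt hpos h
  simpa using this

/-- basic bound: `s_m ε_m < 2^ν |m|^ν`. -/
lemma BB {s : ℕ} (Λ : ℂ) (q : Fin s → ℂ) (a : ℂ) {ν : ℝ} (hq : ∀ i, q i ≠ 0)
    (hS1 : ∀ m : Fin s → ℕ, m ≠ 0 →
      ‖Λ * ∏ i, q i ^ m i - a‖ > (2 : ℝ) ^ (-ν) * ((∑ i, m i : ℕ) : ℝ) ^ (-ν))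
    (hS2 : ∀ m : Fin s → ℕ, m ≠ 0 →
      ‖a * ∏ i, q i ^ (-(m i : ℤ)) - Λ‖ > (2 : ℝ) ^ (-ν) * ((∑ i, m i : ℕ) : ℝ) ^ (-ν))
    {m : Fin s → ℕ} (hm : 0 < ∑ i, m i) :
    smax s q m * eps s Λ q a m < 2 ^ ν * ((∑ i, m i : ℕ) : ℝ) ^ ν := by
  have hm0 : m ≠ 0 := nonzero_of_sum hm
  have hS : (0:ℝ) < ((∑ i, m i : ℕ) : ℝ) := by exact_mod_cast hm
  set Q : ℝ := ∏ i, ‖q i‖ ^ m i with hQ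
  have hQpos : 0 < Q := by
    apply Finset.prod_pos
    intro i _
    exact pow_pos (norm_pos_iff.mpr (hq i)) _
  -- part 1
  have h1 : eps s Λ q a m < 2 ^ ν * ((∑ i, m i : ℕ) : ℝ) ^ ν := inv_bound hS (hS1 m hm0)
  -- the product identity
  have hprodQ : ‖∏ i, q i ^ m i‖ = Q := by
    rw [hQ, norm_prod]
    congr 1
    ext i
    exact norm_pow (q i) (m i)
  have hident : ‖Λ * ∏ i, q i ^ m i - a‖
      = ‖a * ∏ i, q i ^ (-(m i : ℤ)) - Λ‖ * Q := by
    have key : (a * ∏ i, q i ^ (-(m i : ℤ)) - Λ) * (∏ i, q i ^ m i)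
        = -(Λ * ∏ i, q i ^ m i - a) := by
      have hinv : (∏ i, q i ^ (-(m i : ℤ))) * (∏ i, q i ^ m i) = 1 := by
        rw [← Finset.prod_mul_distrib]
        apply Finset.prod_eq_one
        intro i _
        rw [zpow_neg, ← zpow_natCast (q i) (m i)]
        exact inv_mul_cancel₀ (zpow_ne_zero _ (hq i))
      calc (a * ∏ i, q i ^ (-(m i : ℤ)) - Λ) * (∏ i, q i ^ m i)
          = a * ((∏ i, q i ^ (-(m i : ℤ))) * (∏ i, q i ^ m i)) - Λ * ∏ i, q i ^ m i := by ring
        _ = -(Λ * ∏ i, q i ^ m i - a) := by rw [hinv]; ring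
    calc ‖Λ * ∏ i, q i ^ m i - a‖
        = ‖-(Λ * ∏ i, q i ^ m i - a)‖ := (norm_neg _).symm
      _ = ‖(a * ∏ i, q i ^ (-(m i : ℤ)) - Λ) * (∏ i, q i ^ m i)‖ := by rw [key]
      _ = _ := by rw [norm_mul, hprodQ]
  -- part 2
  have h2 : Q * eps s Λ q a m < 2 ^ ν * ((∑ i, m i : ℕ) : ℝ) ^ ν := by
    have : Q * eps s Λ q a m = 1 / ‖a * ∏ i, q i ^ (-(m i : ℤ)) - Λ‖ := by
      rw [eps, hident]
      have habs : ‖a * ∏ i, q i ^ (-(m i : ℤ)) - Λ‖ ≠ 0 := by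
        have hb : (0:ℝ) < (2 : ℝ) ^ (-ν) * ((∑ i, m i : ℕ) : ℝ) ^ (-ν) := by positivity
        exact (hb.trans (hS2 m hm0)).ne'
      field_simp
    rw [this]
    exact inv_bound hS (hS2 m hm0)
  -- combine
  have heps : 0 ≤ eps s Λ q a m := le_of_lt (eps_pos Λ q a hS1 hm)
  rw [smax, max_mul_of_nonneg _ _ heps, one_mul]
  exact max_lt h1 h2

lemma keynum {ν : ℝ} (hν : 0 < ν) {d₁ d₂ : ℝ} (h1 : 1 ≤ d₁) (h2 : 1 ≤ d₂) :
    (2:ℝ) ^ (ν+1) * (min d₁ d₂) ^ ν * ((2:ℝ) ^ (2*ν+1) * (d₁+d₂) ^ ν)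
      ≤ ((2:ℝ) ^ (2*ν+1) * d₁ ^ ν) * ((2:ℝ) ^ (2*ν+1) * d₂ ^ ν) := by
  have hd1 : (0:ℝ) < d₁ := lt_of_lt_of_le one_pos h1
  have hd2 : (0:ℝ) < d₂ := lt_of_lt_of_le one_pos h2
  have hmin : (0:ℝ) ≤ min d₁ d₂ := le_min hd1.le hd2.le
  have core : min d₁ d₂ * (d₁ + d₂) ≤ 2 * (d₁ * d₂) := by
    rcases le_total d₁ d₂ with h | h
    · rw [min_eq_left h]; nlinarith
    · rw [min_eq_right h]; nlinarith
  have core2 : (min d₁ d₂) ^ ν * (d₁+d₂) ^ ν ≤ 2 ^ ν * (d₁ ^ ν * d₂ ^ ν) := by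
    rw [← Real.mul_rpow hmin (by positivity), ← Real.mul_rpow hd1.le hd2.le,
      ← Real.mul_rpow (by norm_num) (by positivity)]
    exact Real.rpow_le_rpow (by positivity) core hν.le
  have e1 : (2:ℝ) ^ (ν+1) * (2:ℝ) ^ (2*ν+1) * (2:ℝ) ^ ν = (2:ℝ) ^ (2*ν+1) * (2:ℝ) ^ (2*ν+1) := by
    rw [← Real.rpow_add (by norm_num : (0:ℝ) < 2), ← Real.rpow_add (by norm_num : (0:ℝ) < 2),
      ← Real.rpow_add (by norm_num : (0:ℝ) < 2)]
    ring_nf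
  calc (2:ℝ) ^ (ν+1) * (min d₁ d₂) ^ ν * ((2:ℝ) ^ (2*ν+1) * (d₁+d₂) ^ ν)
      = ((2:ℝ) ^ (ν+1) * (2:ℝ) ^ (2*ν+1)) * ((min d₁ d₂) ^ ν * (d₁+d₂) ^ ν) := by ring
    _ ≤ ((2:ℝ) ^ (ν+1) * (2:ℝ) ^ (2*ν+1)) * ((2:ℝ) ^ ν * (d₁ ^ ν * d₂ ^ ν)) := by
        apply mul_le_mul_of_nonneg_left core2
        positivity
    _ = ((2:ℝ) ^ (ν+1) * (2:ℝ) ^ (2*ν+1) * (2:ℝ) ^ ν) * (d₁ ^ ν * d₂ ^ ν) := by ring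
    _ = ((2:ℝ) ^ (2*ν+1) * d₁ ^ ν) * ((2:ℝ) ^ (2*ν+1) * d₂ ^ ν) := by rw [e1]; ring


lemma headnum {ν d Sy Sx G : ℝ} (hν : 0 < ν) (hd : 0 ≤ d) (hSy : 0 < Sy) (hSS : Sy ≤ Sx) (hG : 0 ≤ G) :
    (2:ℝ)^(ν+1) * d * ((2:ℝ)^ν * Sy^ν * G) ≤ (2:ℝ)^ν * Sx^ν * ((2:ℝ)^(2*ν+1) * d * G) := by
  have key : (2:ℝ)^(ν+1) * (2:ℝ)^ν * Sy^ν ≤ (2:ℝ)^ν * (2:ℝ)^(2*ν+1) * Sx^ν := by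
    have e1 : (2:ℝ)^(ν+1) * (2:ℝ)^ν = (2:ℝ)^(2*ν+1) := by
      rw [← Real.rpow_add (by norm_num : (0:ℝ) < 2)]; ring_nf
    have e2 : (2:ℝ)^ν * (2:ℝ)^(2*ν+1) = (2:ℝ)^(3*ν+1) := by
      rw [← Real.rpow_add (by norm_num : (0:ℝ) < 2)]; ring_nf
    rw [e1, e2]
    apply mul_le_mul (Real.rpow_le_rpow_of_exponent_le one_le_two (by linarith))
      (Real.rpow_le_rpow hSy.le hSS hν.le) (Real.rpow_nonneg hSy.le ν)
      (Real.rpow_nonneg (by norm_num) _)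
  calc (2:ℝ)^(ν+1) * d * ((2:ℝ)^ν * Sy^ν * G)
      = ((2:ℝ)^(ν+1) * (2:ℝ)^ν * Sy^ν) * (d * G) := by ring
    _ ≤ ((2:ℝ)^ν * (2:ℝ)^(2*ν+1) * Sx^ν) * (d * G) :=
        mul_le_mul_of_nonneg_right key (mul_nonneg hd hG)
    _ = (2:ℝ)^ν * Sx^ν * ((2:ℝ)^(2*ν+1) * d * G) := by ring

lemma KL {s : ℕ} (Λ : ℂ) (q : Fin s → ℂ) (a : ℂ) {ν : ℝ} (hq : ∀ i, q i ≠ 0) (hν : 0 < ν)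
    (hS1 : ∀ m : Fin s → ℕ, m ≠ 0 →
      ‖Λ * ∏ i, q i ^ m i - a‖ > (2 : ℝ) ^ (-ν) * ((∑ i, m i : ℕ) : ℝ) ^ (-ν))
    (hS2 : ∀ m : Fin s → ℕ, m ≠ 0 →
      ‖a * ∏ i, q i ^ (-(m i : ℤ)) - Λ‖ > (2 : ℝ) ^ (-ν) * ((∑ i, m i : ℕ) : ℝ) ^ (-ν))
    (hE : ∀ m p : Fin s → ℕ, (∀ i, p i ≤ m i) → (∑ i, p i) < (∑ i, m i) →
      smax s q m * min (eps s Λ q a m) (eps s Λ q a p) <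
        (2 : ℝ) ^ (ν + 1) * (((∑ i, m i : ℕ) : ℝ) - ((∑ i, p i : ℕ) : ℝ)) ^ ν ∧
      smax s q p * min (eps s Λ q a m) (eps s Λ q a p) <
        (2 : ℝ) ^ (ν + 1) * (((∑ i, m i : ℕ) : ℝ) - ((∑ i, p i : ℕ) : ℝ)) ^ ν) :
    ∀ (n : ℕ) (x : Fin s → ℕ) (L : List (Fin s → ℕ)), L.length ≤ n →
      List.Chain' (Rel s) (x :: L) → (∀ z ∈ x :: L, 0 < ∑ i, z i) →
      ((x :: L).map (fun z => smax s q z * eps s Λ q a z)).prod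
        < 2 ^ ν * ((∑ i, x i : ℕ) : ℝ) ^ ν * gpL s ν (x :: L) := by
  have hFnn : ∀ w : Fin s → ℕ, 0 ≤ smax s q w * eps s Λ q a w := by
    intro w
    apply mul_nonneg (le_trans zero_le_one (le_max_left _ _))
    unfold eps; positivity
  have hPnn : ∀ l : List (Fin s → ℕ), 0 ≤ (l.map (fun z => smax s q z * eps s Λ q a z)).prod := by
    intro l
    apply List.prod_nonneg
    intro w hw
    obtain ⟨w', _, rfl⟩ := List.mem_map.mp hw
    exact hFnn w'
  intro n
  induction n with
  | zero =>
    intro x L hlen hC hpos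
    have hL : L = [] := List.length_eq_zero_iff.mp (Nat.le_zero.mp hlen)
    subst hL
    simp only [List.map_cons, List.map_nil, List.prod_cons, List.prod_nil, mul_one, gpL]
    exact BB Λ q a hq hS1 hS2 (hpos x (by simp))
  | succ n ih =>
    intro x L hlen hC hpos
    rcases L with _ | ⟨y, L'⟩
    · simp only [List.map_cons, List.map_nil, List.prod_cons, List.prod_nil, mul_one, gpL]
      exact BB Λ q a hq hS1 hS2 (hpos x (by simp))
    · -- main case
      have hne : (x :: y :: L').toFinset.Nonempty := ⟨x, by simp⟩
      obtain ⟨z, hzf, hzmin'⟩ := Finset.exists_min_image _ (fun w => eps s Λ q a w) hne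
      have hzmem : z ∈ x :: y :: L' := List.mem_toFinset.mp hzf
      have hzmin : ∀ w ∈ x :: y :: L', eps s Λ q a z ≤ eps s Λ q a w :=
        fun w hw => hzmin' w (List.mem_toFinset.mpr hw)
      obtain ⟨A, B, hAB⟩ := List.append_of_mem hzmem
      rcases A with _ | ⟨a0, A''⟩
      · -- z = x : remove the head
        rw [List.nil_append] at hAB
        injection hAB with hxz hLB
        subst hxz
        have hRxy : Rel s x y := (List.isChain_cons_cons.mp hC).1
        have hmin : eps s Λ q a x ≤ eps s Λ q a y := hzmin y (by simp)
        have hEx := (hE x y hRxy.1 hRxy.2).1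
        rw [min_eq_left hmin] at hEx
        have hCt : List.Chain' (Rel s) (y :: L') := (List.isChain_cons_cons.mp hC).2
        have ihy := ih y L' (by simp only [List.length_cons] at hlen; omega) hCt
          (fun w hw => hpos w (List.mem_cons_of_mem _ hw))
        have hGpos : 0 < gpL s ν (y :: L') := gpL_pos hCt
        have hgoal :
            ((x :: y :: L').map (fun z => smax s q z * eps s Λ q a z)).prod
            = (smax s q x * eps s Λ q a x) *
              ((y :: L').map (fun z => smax s q z * eps s Λ q a z)).prod := by
          simp [List.map_cons, List.prod_cons]
        rw [hgoal]
        have step1 := mul_lt_mul'' hEx ihy (hFnn x) (hPnn (y :: L'))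
        apply lt_of_lt_of_le step1
        have hgpl : gpL s ν (x :: y :: L') = gl s ν x y * gpL s ν (y :: L') := rfl
        rw [hgpl, gl]
        have hd : (0:ℝ) ≤ (((∑ i, x i : ℕ) : ℝ) - ((∑ i, y i : ℕ) : ℝ)) ^ ν :=
          Real.rpow_nonneg (by linarith [one_le_gap hRxy]) ν
        have hSy : (0:ℝ) < ((∑ i, y i : ℕ) : ℝ) := by
          exact_mod_cast hpos y (by simp)
        have hSS : ((∑ i, y i : ℕ) : ℝ) ≤ ((∑ i, x i : ℕ) : ℝ) := by
          exact_mod_cast hRxy.2.le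
        have := headnum (d := (((∑ i, x i : ℕ) : ℝ) - ((∑ i, y i : ℕ) : ℝ)) ^ ν)
          (G := gpL s ν (y :: L')) hν hd hSy hSS hGpos.le
        calc (2:ℝ) ^ (ν + 1) * (((∑ i, x i : ℕ) : ℝ) - ((∑ i, y i : ℕ) : ℝ)) ^ ν *
              (2 ^ ν * ((∑ i, y i : ℕ) : ℝ) ^ ν * gpL s ν (y :: L'))
            ≤ 2 ^ ν * ((∑ i, x i : ℕ) : ℝ) ^ ν *
              ((2:ℝ)^(2*ν+1) * (((∑ i, x i : ℕ) : ℝ) - ((∑ i, y i : ℕ) : ℝ)) ^ ν *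
                gpL s ν (y :: L')) := this
          _ = 2 ^ ν * ((∑ i, x i : ℕ) : ℝ) ^ ν *
              ((2:ℝ)^(2*ν+1) * (((∑ i, x i : ℕ) : ℝ) - ((∑ i, y i : ℕ) : ℝ)) ^ ν *
                gpL s ν (y :: L')) := rfl
      · -- z is inside the tail
        have hxa : x = a0 := List.head_eq_of_cons_eq hAB
        subst hxa
        have hL : y :: L' = A'' ++ z :: B := List.tail_eq_of_cons_eq hAB
        have heq : x :: y :: L' = (x :: A'') ++ z :: B := by
          rw [List.cons_append]; exact congrArg (x :: ·) hL
        rw [heq] at hC hpos ⊢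
        obtain ⟨hCA, hCzB, hlink⟩ := List.isChain_append.mp hC
        have hAne : (x :: A'') ≠ [] := List.cons_ne_nil _ _
        set u := (x :: A'').getLast hAne with hu
        have hRuz : Rel s u z := by
          apply hlink u _ z (by simp)
          rw [List.getLast?_eq_getLast hAne]; rfl
        have humem : u ∈ (x :: A'') ++ z :: B :=
          List.mem_append_left _ (List.getLast_mem hAne)
        have hεu : eps s Λ q a z ≤ eps s Λ q a u := hzmin u (heq ▸ humem)
        have hlen' : L'.length ≤ n := by simp only [List.length_cons] at hlen; omega
        have hlenA : A''.length + B.length = L'.length := by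
          have := congrArg List.length hL
          simp [List.length_append] at this
          omega
        rcases B with _ | ⟨v, B'⟩
        · -- z is the last element
          have hEz := (hE u z hRuz.1 hRuz.2).2
          rw [min_eq_right hεu] at hEz
          have ihA := ih x A'' (by simp only [List.length_nil] at hlenA; omega) hCA
            (fun w hw => hpos w (List.mem_append_left _ hw))
          have hprod : (((x :: A'') ++ [z]).map (fun w => smax s q w * eps s Λ q a w)).prod
              = ((x :: A'').map (fun w => smax s q w * eps s Λ q a w)).prod *
                (smax s q z * eps s Λ q a z) := by
            simp only [List.map_append, List.map_cons, List.map_nil, List.prod_append,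
              List.prod_cons, List.prod_nil, mul_one]
          rw [hprod]
          have step1 := mul_lt_mul'' ihA hEz (hPnn (x :: A'')) (hFnn z)
          apply lt_of_lt_of_le step1
          rw [gpL_append (x :: A'') hAne z []]
          have hgz : gpL s ν [z] = 1 := rfl
          rw [hgz, mul_one, gl]
          have hdν : (0:ℝ) ≤ (((∑ i, u i : ℕ) : ℝ) - ((∑ i, z i : ℕ) : ℝ)) ^ ν :=
            Real.rpow_nonneg (by linarith [one_le_gap hRuz]) ν
          have h2le : (2:ℝ)^(ν+1) ≤ (2:ℝ)^(2*ν+1) :=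
            Real.rpow_le_rpow_of_exponent_le one_le_two (by linarith)
          have hGA : 0 < gpL s ν (x :: A'') := gpL_pos hCA
          have hSx : (0:ℝ) < ((∑ i, x i : ℕ) : ℝ) := by
            exact_mod_cast hpos x (by simp)
          calc 2 ^ ν * ((∑ i, x i : ℕ) : ℝ) ^ ν * gpL s ν (x :: A'') *
                ((2:ℝ)^(ν+1) * (((∑ i, u i : ℕ) : ℝ) - ((∑ i, z i : ℕ) : ℝ)) ^ ν)
              ≤ 2 ^ ν * ((∑ i, x i : ℕ) : ℝ) ^ ν * gpL s ν (x :: A'') *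
                ((2:ℝ)^(2*ν+1) * (((∑ i, u i : ℕ) : ℝ) - ((∑ i, z i : ℕ) : ℝ)) ^ ν) := by
                apply mul_le_mul_of_nonneg_left (mul_le_mul_of_nonneg_right h2le hdν)
                positivity
            _ = 2 ^ ν * ((∑ i, x i : ℕ) : ℝ) ^ ν * (gpL s ν (x :: A'') *
                ((2:ℝ)^(2*ν+1) * (((∑ i, u i : ℕ) : ℝ) - ((∑ i, z i : ℕ) : ℝ)) ^ ν)) := by ring
        · -- z is in the middle
          have hRzv : Rel s z v := (List.isChain_cons_cons.mp hCzB).1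
          have hεv : eps s Λ q a z ≤ eps s Λ q a v := by
            apply hzmin v
            rw [heq]
            exact List.mem_append_right _ (by simp)
          set Su : ℝ := ((∑ i, u i : ℕ) : ℝ) with hSu
          set Sz : ℝ := ((∑ i, z i : ℕ) : ℝ) with hSz
          set Sv : ℝ := ((∑ i, v i : ℕ) : ℝ) with hSv
          have hd1 : (1:ℝ) ≤ Su - Sz := one_le_gap hRuz
          have hd2 : (1:ℝ) ≤ Sz - Sv := one_le_gap hRzv
          -- bound on F z
          have hFz : smax s q z * eps s Λ q a z
              < (2:ℝ)^(ν+1) * (min (Su - Sz) (Sz - Sv)) ^ ν := by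
            rcases le_total (Su - Sz) (Sz - Sv) with h | h
            · rw [min_eq_left h]
              have hEz := (hE u z hRuz.1 hRuz.2).2
              rwa [min_eq_right hεu] at hEz
            · rw [min_eq_right h]
              have hEz := (hE z v hRzv.1 hRzv.2).1
              rwa [min_eq_left hεv] at hEz
          -- new chain
          have hCB' : List.Chain' (Rel s) (v :: B') := (List.isChain_cons_cons.mp hCzB).2
          have hC' : List.Chain' (Rel s) ((x :: A'') ++ v :: B') := by
            apply List.isChain_append.mpr
            refine ⟨hCA, hCB', ?_⟩
            intro p hp w hw
            rw [List.getLast?_eq_getLast hAne] at hp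
            simp only [List.head?_cons, Option.mem_some_iff] at hp hw
            rw [← hp, ← hw]
            exact Rel.trans' hRuz hRzv
          have hpos' : ∀ w ∈ x :: (A'' ++ v :: B'), 0 < ∑ i, w i := by
            intro w hw
            apply hpos w
            rcases List.mem_cons.mp hw with h | h
            · exact h ▸ List.mem_append_left _ List.mem_cons_self
            · rcases List.mem_append.mp h with h2 | h2
              · exact List.mem_append_left _ (List.mem_cons_of_mem _ h2)
              · exact List.mem_append_right _ (List.mem_cons_of_mem _ h2)
          have ihm := ih x (A'' ++ v :: B')
            (by simp only [List.length_cons] at hlenA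
                simp only [List.length_append, List.length_cons]; omega)
            (by rw [← List.cons_append]; exact hC') hpos'
          rw [← List.cons_append] at ihm
          -- products
          have hprod : (((x :: A'') ++ z :: v :: B').map
                (fun w => smax s q w * eps s Λ q a w)).prod
              = (((x :: A'') ++ v :: B').map (fun w => smax s q w * eps s Λ q a w)).prod *
                (smax s q z * eps s Λ q a z) := by
            simp only [List.map_append, List.map_cons, List.map_nil, List.prod_append,
              List.prod_cons, List.prod_nil, mul_one]
            ring
          rw [hprod]
          have step1 := mul_lt_mul'' ihm hFz (hPnn _) (hFnn z)
          apply lt_of_lt_of_le step1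
          -- gpL algebra
          rw [gpL_append (x :: A'') hAne v B', gpL_append (x :: A'') hAne z (v :: B')]
          have hgzv : gpL s ν (z :: v :: B') = gl s ν z v * gpL s ν (v :: B') := rfl
          rw [hgzv, ← hu]
          have hGA : 0 < gpL s ν (x :: A'') := gpL_pos hCA
          have hGB : 0 < gpL s ν (v :: B') := gpL_pos hCB'
          have hSx : (0:ℝ) < ((∑ i, x i : ℕ) : ℝ) := by
            exact_mod_cast hpos x (by simp)
          have hguv : gl s ν u v = (2:ℝ)^(2*ν+1) * ((Su - Sz) + (Sz - Sv)) ^ ν := by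
            rw [gl]
            have hcast : ((∑ i, u i : ℕ) : ℝ) - ((∑ i, v i : ℕ) : ℝ) = (Su - Sz) + (Sz - Sv) := by
              rw [hSu, hSv, hSz]; ring
            rw [hcast]
          have hguz : gl s ν u z = (2:ℝ)^(2*ν+1) * (Su - Sz) ^ ν := rfl
          have hgzv' : gl s ν z v = (2:ℝ)^(2*ν+1) * (Sz - Sv) ^ ν := rfl
          have hkey := keynum hν hd1 hd2
          calc 2 ^ ν * ((∑ i, x i : ℕ) : ℝ) ^ ν *
                (gpL s ν (x :: A'') * gl s ν u v * gpL s ν (v :: B')) *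
                ((2:ℝ)^(ν+1) * (min (Su - Sz) (Sz - Sv)) ^ ν)
              = (2 ^ ν * ((∑ i, x i : ℕ) : ℝ) ^ ν * gpL s ν (x :: A'') * gpL s ν (v :: B')) *
                ((2:ℝ)^(ν+1) * (min (Su - Sz) (Sz - Sv)) ^ ν *
                  ((2:ℝ)^(2*ν+1) * ((Su - Sz) + (Sz - Sv)) ^ ν)) := by
                rw [hguv]; ring
            _ ≤ (2 ^ ν * ((∑ i, x i : ℕ) : ℝ) ^ ν * gpL s ν (x :: A'') * gpL s ν (v :: B')) *
                (((2:ℝ)^(2*ν+1) * (Su - Sz) ^ ν) * ((2:ℝ)^(2*ν+1) * (Sz - Sv) ^ ν)) := by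
                apply mul_le_mul_of_nonneg_left hkey
                positivity
            _ = 2 ^ ν * ((∑ i, x i : ℕ) : ℝ) ^ ν *
                (gpL s ν (x :: A'') * gl s ν u z * (gl s ν z v * gpL s ν (v :: B'))) := by
                rw [hguz, hgzv']; ring

lemma gpL_cons₂ {s : ℕ} (ν : ℝ) (x y : Fin s → ℕ) (l : List (Fin s → ℕ)) :
    gpL s ν (x :: y :: l) = gl s ν x y * gpL s ν (y :: l) := rfl

lemma chain'_ofFn {α : Type*} (R : α → α → Prop) :
    ∀ (r : ℕ) (M : Fin (r+1) → α), (∀ i : Fin r, R (M i.castSucc) (M i.succ)) →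
      List.Chain' R (List.ofFn M) := by
  intro r
  induction r with
  | zero => intro M _; simp [List.ofFn_succ]; exact List.isChain_singleton _
  | succ r ih =>
    intro M h
    rw [List.ofFn_succ]
    apply List.IsChain.cons
    · apply ih (fun i => M i.succ)
      intro i
      have := h i.succ
      rwa [← Fin.succ_castSucc] at this
    · intro w hw
      rw [List.ofFn_succ] at hw
      simp only [List.head?_cons, Option.mem_some_iff] at hw
      rw [← hw]
      simpa using h 0

lemma gpL_ofFn {s : ℕ} (ν : ℝ) :
    ∀ (r : ℕ) (M : Fin (r+1) → Fin s → ℕ),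
      gpL s ν (List.ofFn M) = ∏ i : Fin r, gl s ν (M i.castSucc) (M i.succ) := by
  intro r
  induction r with
  | zero => intro M; simp [List.ofFn_succ, gpL]
  | succ r ih =>
    intro M
    rw [List.ofFn_succ, List.ofFn_succ (f := fun i : Fin (r+1) => M i.succ), gpL_cons₂,
      ← List.ofFn_succ (f := fun i : Fin (r+1) => M i.succ), ih (fun i => M i.succ),
      Fin.prod_univ_succ]
    rw [Fin.castSucc_zero]
    congr 1

end Stmt7

open Stmt7 in
/-- Lemma 4 of the paper, an analogue of Siegel's Lemma 2. -/
theorem stmt7 (s : ℕ) (hs : 1 ≤ s) (Λ : ℂ) (hΛ : Λ ≠ 0) (q : Fin s → ℂ) (hq : ∀ i, q i ≠ 0)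
    (a : ℂ) (ha : a ≠ 0) (ν : ℝ) (hν : 0 < ν)
    (hS1 : ∀ m : Fin s → ℕ, m ≠ 0 →
      ‖Λ * ∏ i, q i ^ m i - a‖ > (2 : ℝ) ^ (-ν) * ((∑ i, m i : ℕ) : ℝ) ^ (-ν))
    (hS2 : ∀ m : Fin s → ℕ, m ≠ 0 →
      ‖a * ∏ i, q i ^ (-(m i : ℤ)) - Λ‖ > (2 : ℝ) ^ (-ν) * ((∑ i, m i : ℕ) : ℝ) ^ (-ν))
    (hE : ∀ m p : Fin s → ℕ, (∀ i, p i ≤ m i) → (∑ i, p i) < (∑ i, m i) →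
      smax s q m * min (eps s Λ q a m) (eps s Λ q a p) <
        (2 : ℝ) ^ (ν + 1) * (((∑ i, m i : ℕ) : ℝ) - ((∑ i, p i : ℕ) : ℝ)) ^ ν ∧
      smax s q p * min (eps s Λ q a m) (eps s Λ q a p) <
        (2 : ℝ) ^ (ν + 1) * (((∑ i, m i : ℕ) : ℝ) - ((∑ i, p i : ℕ) : ℝ)) ^ ν)
    (N₁ : ℝ) (hN₁ : N₁ = (2 : ℝ) ^ (2 * ν + 1)) :
    ∀ (r : ℕ) (M : Fin (r + 1) → Fin s → ℕ),
      (∀ i : Fin r, (∀ j, M i.succ j ≤ M i.castSucc j) ∧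
        (∑ j, M i.succ j) < (∑ j, M i.castSucc j)) →
      M (Fin.last r) ≠ 0 →
      ∏ i, smax s q (M i) * eps s Λ q a (M i) <
        N₁ ^ (r + 1) * ((∑ j, M 0 j : ℕ) : ℝ) ^ ν *
          ∏ i : Fin r, (((∑ j, M i.castSucc j : ℕ) : ℝ) - ((∑ j, M i.succ j : ℕ) : ℝ)) ^ ν := by
  subst hN₁
  intro r M hchain hlast
  have hanti : StrictAnti (fun i : Fin (r+1) => ∑ j, M i j) :=
    Fin.strictAnti_iff_succ_lt.mpr (fun i => (hchain i).2)
  have hlastpos : 0 < ∑ j, M (Fin.last r) j := by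
    rcases Nat.eq_zero_or_pos (∑ j, M (Fin.last r) j) with h | h
    · exfalso
      apply hlast
      funext j
      exact Finset.sum_eq_zero_iff.mp h j (Finset.mem_univ j)
    · exact h
  have hposall : ∀ i : Fin (r+1), 0 < ∑ j, M i j := fun i =>
    lt_of_lt_of_le hlastpos (hanti.antitone (Fin.le_last i))
  have hpos : ∀ w ∈ List.ofFn M, 0 < ∑ i, w i := by
    intro w hw
    obtain ⟨i, rfl⟩ := (List.mem_ofFn (f := M) (a := w)).mp hw
    exact hposall i
  have hchain' : List.Chain' (Rel s) (List.ofFn M) :=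
    chain'_ofFn (Rel s) r M (fun i => ⟨(hchain i).1, (hchain i).2⟩)
  have hofn : List.ofFn M = M 0 :: List.ofFn (fun i : Fin r => M i.succ) := List.ofFn_succ (f := M)
  have hKL := KL Λ q a hq hν hS1 hS2 hE r (M 0) (List.ofFn (fun i : Fin r => M i.succ))
    (by simp) (hofn ▸ hchain') (hofn ▸ hpos)
  rw [← hofn] at hKL
  have h1 : ((List.ofFn M).map (fun z => smax s q z * eps s Λ q a z)).prod
      = ∏ i, smax s q (M i) * eps s Λ q a (M i) := by
    rw [List.map_ofFn, List.prod_ofFn]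
    rfl
  rw [h1, gpL_ofFn ν r M] at hKL
  have hglprod : ∏ i : Fin r, gl s ν (M i.castSucc) (M i.succ)
      = ((2:ℝ)^(2*ν+1)) ^ r *
        ∏ i : Fin r, (((∑ j, M i.castSucc j : ℕ) : ℝ) - ((∑ j, M i.succ j : ℕ) : ℝ)) ^ ν := by
    unfold gl
    rw [Finset.prod_mul_distrib, Finset.prod_const, Finset.card_univ, Fintype.card_fin]
  rw [hglprod] at hKL
  apply lt_of_lt_of_le hKL
  -- final constant comparison
  have hGnn : (0:ℝ) ≤ ∏ i : Fin r,
      (((∑ j, M i.castSucc j : ℕ) : ℝ) - ((∑ j, M i.succ j : ℕ) : ℝ)) ^ ν := by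
    apply Finset.prod_nonneg
    intro i _
    apply Real.rpow_nonneg
    have := one_le_gap (s := s) ⟨(hchain i).1, (hchain i).2⟩
    linarith
  have hSnn : (0:ℝ) ≤ ((∑ j, M 0 j : ℕ) : ℝ) ^ ν := Real.rpow_nonneg (by positivity) ν
  have h2le : (2:ℝ)^ν ≤ (2:ℝ)^(2*ν+1) :=
    Real.rpow_le_rpow_of_exponent_le one_le_two (by linarith)
  calc (2:ℝ) ^ ν * ((∑ j, M 0 j : ℕ) : ℝ) ^ ν * (((2:ℝ)^(2*ν+1)) ^ r *
        ∏ i : Fin r, (((∑ j, M i.castSucc j : ℕ) : ℝ) - ((∑ j, M i.succ j : ℕ) : ℝ)) ^ ν)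
      = (2:ℝ) ^ ν * (((∑ j, M 0 j : ℕ) : ℝ) ^ ν * ((2:ℝ)^(2*ν+1)) ^ r *
        ∏ i : Fin r, (((∑ j, M i.castSucc j : ℕ) : ℝ) - ((∑ j, M i.succ j : ℕ) : ℝ)) ^ ν) := by
        ring
    _ ≤ (2:ℝ)^(2*ν+1) * (((∑ j, M 0 j : ℕ) : ℝ) ^ ν * ((2:ℝ)^(2*ν+1)) ^ r *
        ∏ i : Fin r, (((∑ j, M i.castSucc j : ℕ) : ℝ) - ((∑ j, M i.succ j : ℕ) : ℝ)) ^ ν) := by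
        apply mul_le_mul_of_nonneg_right h2le
        apply mul_nonneg (mul_nonneg hSnn (by positivity)) hGnn
    _ = ((2:ℝ)^(2*ν+1)) ^ (r+1) * ((∑ j, M 0 j : ℕ) : ℝ) ^ ν *
        ∏ i : Fin r, (((∑ j, M i.castSucc j : ℕ) : ℝ) - ((∑ j, M i.succ j : ℕ) : ℝ)) ^ ν := by
        rw [pow_succ]
        ring
end

section
/- Let L be a monic complex polynomial of degree n ≥ 1 with L(0) ≠ 0, with roots a₁,…,a_n listed with multiplicity, let ν > 0, and assume that for each root a_j conditions (S1)–(S2) and condition (E) hold with exponent ν. Set ε_m = 1/|L(Λq^m)| (well defined since L(Λq^m) ≠ 0 by (S1)) and N₁ = 2^{2ν+1}. Then for every integer r ≥ 0 and every chain of multi-indices m^(0) > m^(1) > ⋯ > m^(r) with m^(r) nonzero, one has ∏_{i=0}^{r} s^n_{m^(i)}·ε_{m^(i)} < ( N₁^{r+1}·|m^(0)|^ν·∏_{i=1}^{r} (|m^(i−1)|−|m^(i)|)^ν )^n. -/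
/-- `ε_m = 1/|L(Λ q^m)|`. -/
noncomputable def epsL (s : ℕ) (Λ : ℂ) (q : Fin s → ℂ) (L : Polynomial ℂ) (m : Fin s → ℕ) : ℝ :=
  1 / ‖Polynomial.eval (Λ * ∏ i, q i ^ m i) L‖

lemma prod_split (f : ℕ → ℝ) (a b : ℕ) :
    ∏ k ∈ Finset.range (a + 1 + b), f k =
      ((∏ k ∈ Finset.range a, f k) * f a) * ∏ k ∈ Finset.range b, f (a + 1 + k) := by
  rw [Finset.prod_range_add, Finset.prod_range_succ]

lemma smax_pos (s : ℕ) (q : Fin s → ℂ) (m : Fin s → ℕ) : 0 < smax s q m :=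
  lt_of_lt_of_le zero_lt_one (le_max_left _ _)

lemma size_pos (s : ℕ) (m : Fin s → ℕ) (hm : m ≠ 0) : 0 < ∑ i, m i := by
  rcases Nat.eq_zero_or_pos (∑ i, m i) with h | h
  · exact absurd (funext fun i => (Finset.sum_eq_zero_iff.mp h i (Finset.mem_univ i))) hm
  · exact h

lemma eps_pos (s : ℕ) (Λ : ℂ) (q : Fin s → ℂ) (a : ℂ) (ν : ℝ) (hν : 0 < ν)
    (hS1 : ∀ m : Fin s → ℕ, m ≠ 0 →
      ‖Λ * ∏ i, q i ^ m i - a‖ > (2 : ℝ) ^ (-ν) * ((∑ i, m i : ℕ) : ℝ) ^ (-ν))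
    (m : Fin s → ℕ) (hm : m ≠ 0) : 0 < eps s Λ q a m := by
  have h1 : (0:ℝ) < ((∑ i, m i : ℕ) : ℝ) := by exact_mod_cast size_pos s m hm
  have h2 : (0:ℝ) < (2 : ℝ) ^ (-ν) * ((∑ i, m i : ℕ) : ℝ) ^ (-ν) :=
    mul_pos (Real.rpow_pos_of_pos two_pos _) (Real.rpow_pos_of_pos h1 _)
  exact div_pos zero_lt_one (lt_trans h2 (hS1 m hm))

lemma termBound (s : ℕ) (Λ : ℂ) (q : Fin s → ℂ) (hq : ∀ i, q i ≠ 0) (a : ℂ) (ν : ℝ) (hν : 0 < ν)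
    (hS1 : ∀ m : Fin s → ℕ, m ≠ 0 →
      ‖Λ * ∏ i, q i ^ m i - a‖ > (2 : ℝ) ^ (-ν) * ((∑ i, m i : ℕ) : ℝ) ^ (-ν))
    (hS2 : ∀ m : Fin s → ℕ, m ≠ 0 →
      ‖a * ∏ i, q i ^ (-(m i : ℤ)) - Λ‖
        > (2 : ℝ) ^ (-ν) * ((∑ i, m i : ℕ) : ℝ) ^ (-ν))
    (m : Fin s → ℕ) (hm : m ≠ 0) :
    smax s q m * eps s Λ q a m < (2:ℝ) ^ ν * ((∑ i, m i : ℕ) : ℝ) ^ ν := by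
  set Sm : ℝ := ((∑ i, m i : ℕ) : ℝ) with hSm
  have hSmpos : 0 < Sm := by rw [hSm]; exact_mod_cast size_pos s m hm
  set c : ℝ := (2 : ℝ) ^ (-ν) * Sm ^ (-ν) with hc
  have hcpos : 0 < c := mul_pos (Real.rpow_pos_of_pos two_pos _) (Real.rpow_pos_of_pos hSmpos _)
  have hcinv : c⁻¹ = (2:ℝ) ^ ν * Sm ^ ν := by
    rw [hc, Real.rpow_neg (by norm_num : (0:ℝ) ≤ 2), Real.rpow_neg hSmpos.le, mul_inv, inv_inv, inv_inv]
  set P : ℂ := ∏ i, q i ^ m i with hP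
  have hPne : P ≠ 0 := Finset.prod_ne_zero_iff.mpr fun i _ => pow_ne_zero _ (hq i)
  set D : ℝ := ‖Λ * P - a‖ with hD
  have hDpos : 0 < D := lt_trans hcpos (hS1 m hm)
  set Q : ℝ := ∏ i, ‖q i‖ ^ m i with hQ
  have hQeq : ‖P‖ = Q := by
    rw [hP, norm_prod]
    exact Finset.prod_congr rfl fun i _ => norm_pow _ _
  have hQpos : 0 < Q := by
    rw [← hQeq]; exact norm_pos_iff.mpr hPne
  -- rewrite S2
  have hrew : a * ∏ i, q i ^ (-(m i : ℤ)) - Λ = -(P⁻¹ * (Λ * P - a)) := by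
    have : (∏ i, q i ^ (-(m i : ℤ))) = P⁻¹ := by
      rw [hP, ← Finset.prod_inv_distrib]
      exact Finset.prod_congr rfl fun i _ => by
        rw [zpow_neg, zpow_natCast]
    rw [this]
    field_simp
    ring
  have hS2' : c < D / Q := by
    have h := hS2 m hm
    rw [hrew, norm_neg, norm_mul, norm_inv, hQeq] at h
    rw [div_eq_inv_mul]
    exact h
  have hcQ : c * Q < D := (lt_div_iff₀ hQpos).mp hS2'
  rw [← hcinv]
  have h1 : 1 / D < c⁻¹ := by
    rw [← one_div c]
    exact one_div_lt_one_div_of_lt hcpos (hS1 m hm)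
  have h2 : Q * (1 / D) < c⁻¹ := by
    rw [mul_one_div, ← one_div c, div_lt_div_iff₀ hDpos hcpos, one_mul]
    linarith [hcQ]
  unfold smax eps
  rw [← hQ, ← hP, ← hD, max_mul_of_nonneg _ _ (by positivity : (0:ℝ) ≤ 1 / D), one_mul]
  exact max_lt h1 h2
noncomputable def Tt (s : ℕ) (Λ : ℂ) (q : Fin s → ℂ) (a : ℂ) (M : ℕ → Fin s → ℕ) (k : ℕ) : ℝ :=
  smax s q (M k) * eps s Λ q a (M k)

noncomputable def Sz (s : ℕ) (M : ℕ → Fin s → ℕ) (k : ℕ) : ℝ := ((∑ j, M k j : ℕ) : ℝ)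

noncomputable def Gp (s : ℕ) (M : ℕ → Fin s → ℕ) (k : ℕ) : ℝ := Sz s M k - Sz s M (k+1)

lemma core (s : ℕ) (Λ : ℂ) (q : Fin s → ℂ) (a : ℂ) (ν : ℝ) (hν : 0 < ν)
    (hpos : ∀ m : Fin s → ℕ, m ≠ 0 → 0 < eps s Λ q a m)
    (hB : ∀ m : Fin s → ℕ, m ≠ 0 →
      smax s q m * eps s Λ q a m < (2:ℝ) ^ ν * ((∑ i, m i : ℕ) : ℝ) ^ ν)
    (hE : ∀ m p : Fin s → ℕ, (∀ i, p i ≤ m i) → (∑ i, p i) < (∑ i, m i) →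
      smax s q m * min (eps s Λ q a m) (eps s Λ q a p) <
        (2 : ℝ) ^ (ν + 1) * (((∑ i, m i : ℕ) : ℝ) - ((∑ i, p i : ℕ) : ℝ)) ^ ν ∧
      smax s q p * min (eps s Λ q a m) (eps s Λ q a p) <
        (2 : ℝ) ^ (ν + 1) * (((∑ i, m i : ℕ) : ℝ) - ((∑ i, p i : ℕ) : ℝ)) ^ ν) :
    ∀ r : ℕ, ∀ M : ℕ → Fin s → ℕ,
      (∀ i < r, (∀ j, M (i+1) j ≤ M i j) ∧ (∑ j, M (i+1) j) < (∑ j, M i j)) →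
      M r ≠ 0 →
      ∏ k ∈ Finset.range (r+1), Tt s Λ q a M k <
        ((2:ℝ) ^ (2*ν+1)) ^ (r+1) * (Sz s M 0) ^ ν *
          ∏ k ∈ Finset.range r, (Gp s M k) ^ ν := by
  have hN1 : (2:ℝ) ^ ν ≤ (2:ℝ) ^ (2*ν+1) :=
    Real.rpow_le_rpow_of_exponent_le one_le_two (by linarith)
  have hN2 : (2:ℝ) ^ (ν+1) ≤ (2:ℝ) ^ (2*ν+1) :=
    Real.rpow_le_rpow_of_exponent_le one_le_two (by linarith)
  have hNpos : (0:ℝ) < (2:ℝ) ^ (2*ν+1) := Real.rpow_pos_of_pos two_pos _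
  intro r
  induction r with
  | zero =>
    intro M _ h0
    rw [show (0:ℕ)+1 = 1 from rfl, Finset.prod_range_one, pow_one, Finset.range_zero,
      Finset.prod_empty, mul_one]
    have hS0 : (0:ℝ) < Sz s M 0 := by
      unfold Sz; exact_mod_cast size_pos s (M 0) h0
    calc Tt s Λ q a M 0 < (2:ℝ)^ν * (Sz s M 0) ^ ν := hB (M 0) h0
      _ ≤ (2:ℝ)^(2*ν+1) * (Sz s M 0) ^ ν :=
        mul_le_mul_of_nonneg_right hN1 (Real.rpow_pos_of_pos hS0 ν).le
  | succ r ih =>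
    intro M hchain hlast
    -- all entries nonzero
    have hsz : ∀ u k, k + u ≤ r + 1 → (∑ j, M (k+u) j) ≤ ∑ j, M k j := by
      intro u
      induction u with
      | zero => intro k _; simp
      | succ u iht =>
        intro k hk
        have h1 : k + (u+1) = (k+u) + 1 := by omega
        rw [h1]
        exact le_trans (hchain (k+u) (by omega)).2.le (iht k (by omega))
    have hne : ∀ k, k ≤ r+1 → M k ≠ 0 := by
      intro k hk h0
      apply hlast
      have := hsz (r+1-k) k (by omega)
      rw [show k + (r+1-k) = r+1 by omega] at this
      rw [h0] at this
      simp only [Pi.zero_apply, Finset.sum_const_zero, Nat.le_zero] at this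
      funext j
      exact Finset.sum_eq_zero_iff.mp this j (Finset.mem_univ j)
    have htpos : ∀ k, k ≤ r+1 → 0 < Tt s Λ q a M k := fun k hk =>
      mul_pos (smax_pos s q (M k)) (hpos (M k) (hne k hk))
    have hgap : ∀ k, k ≤ r → (1:ℝ) ≤ Gp s M k := by
      intro k hk
      have := (hchain k (by omega)).2
      unfold Gp Sz
      have h2 : ((∑ j, M (k+1) j : ℕ) : ℝ) + 1 ≤ ((∑ j, M k j : ℕ) : ℝ) := by
        exact_mod_cast Nat.succ_le_of_lt this
      linarith
    have hSmono : ∀ k, k ≤ r + 1 → Sz s M k ≤ Sz s M 0 := by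
      intro k hk
      unfold Sz
      have h := hsz k 0 (by omega)
      rw [Nat.zero_add] at h
      exact_mod_cast h
    have hS0pos : (0:ℝ) < Sz s M 0 := by
      unfold Sz; exact_mod_cast size_pos s (M 0) (hne 0 (by omega))
    -- argmin
    obtain ⟨i, hiMem, hiMin⟩ := Finset.exists_min_image (Finset.range (r+2))
      (fun k => eps s Λ q a (M k)) ⟨0, Finset.mem_range.mpr (by omega)⟩
    have hil : i ≤ r + 1 := by
      have := Finset.mem_range.mp hiMem; omega
    -- the chain with index i removed
    set M' : ℕ → Fin s → ℕ := fun k => if k < i then M k else M (k+1) with hM'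
    have chain' : ∀ k < r, (∀ j, M' (k+1) j ≤ M' k j) ∧ (∑ j, M' (k+1) j) < (∑ j, M' k j) := by
      intro k hk
      by_cases h1 : k + 1 < i
      · have h2 : k < i := by omega
        simp only [hM', if_pos h1, if_pos h2]
        exact hchain k (by omega)
      · by_cases h2 : k < i
        · -- k + 1 = i
          simp only [hM', if_neg h1, if_pos h2]
          obtain ⟨c1a, c1b⟩ := hchain k (by omega)
          obtain ⟨c2a, c2b⟩ := hchain (k+1) (by omega)
          exact ⟨fun j => le_trans (c2a j) (c1a j), lt_trans c2b c1b⟩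
        · have h3 : ¬ (k + 1 < i) := by omega
          simp only [hM', if_neg h3, if_neg h2]
          exact hchain (k+1) (by omega)
    have last' : M' r ≠ 0 := by
      by_cases h : r < i
      · simp only [hM', if_pos h]; exact hne r (by omega)
      · simp only [hM', if_neg h]; exact hlast
    have IH := ih M' chain' last'
    have hP'pos : 0 < ∏ k ∈ Finset.range (r+1), Tt s Λ q a M' k := by
      apply Finset.prod_pos
      intro k hk
      have hk' := Finset.mem_range.mp hk
      by_cases h : k < i
      · have : Tt s Λ q a M' k = Tt s Λ q a M k := by
          unfold Tt; simp only [hM', if_pos h]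
        rw [this]; exact htpos k (by omega)
      · have : Tt s Λ q a M' k = Tt s Λ q a M (k+1) := by
          unfold Tt; simp only [hM', if_neg h]
        rw [this]; exact htpos (k+1) (by omega)
    have hIHpos : 0 < ((2:ℝ) ^ (2*ν+1)) ^ (r+1) * (Sz s M' 0) ^ ν *
          ∏ k ∈ Finset.range r, (Gp s M' k) ^ ν := lt_trans hP'pos IH
    -- nonneg facts for gap powers
    have hgapnn : ∀ k, k ≤ r → (0:ℝ) ≤ (Gp s M k) ^ ν := fun k hk =>
      Real.rpow_nonneg (le_trans zero_le_one (hgap k hk)) ν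
    have hSnn : ∀ k, (0:ℝ) ≤ Sz s M k := fun k => by unfold Sz; positivity
    by_cases hi0 : i = 0
    · -- Case A : remove the first index
      subst hi0
      have hc := hchain 0 (by omega)
      have hmin : min (eps s Λ q a (M 0)) (eps s Λ q a (M (0+1))) = eps s Λ q a (M 0) :=
        min_eq_left (hiMin (0+1) (Finset.mem_range.mpr (by omega)))
      have tb : Tt s Λ q a M 0 < (2:ℝ)^(ν+1) * (Gp s M 0) ^ ν := by
        have h := (hE (M 0) (M (0+1)) hc.1 hc.2).1
        rw [hmin] at h
        exact h
      have hP'eq : ∏ k ∈ Finset.range (r+1), Tt s Λ q a M' k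
          = ∏ k ∈ Finset.range (r+1), Tt s Λ q a M (k+1) :=
        Finset.prod_congr rfl fun k _ => by
          unfold Tt; simp only [hM', if_neg (Nat.not_lt_zero k)]
      have htot : ∏ k ∈ Finset.range (r+1+1), Tt s Λ q a M k
          = (∏ k ∈ Finset.range (r+1), Tt s Λ q a M' k) * Tt s Λ q a M 0 := by
        rw [hP'eq]; exact Finset.prod_range_succ' _ (r+1)
      have hSz' : Sz s M' 0 = Sz s M (0+1) := by
        unfold Sz; simp only [hM', if_neg (Nat.not_lt_zero 0)]
      have hGp' : ∏ k ∈ Finset.range r, (Gp s M' k) ^ ν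
          = ∏ k ∈ Finset.range r, (Gp s M (k+1)) ^ ν :=
        Finset.prod_congr rfl fun k _ => by
          unfold Gp Sz
          simp only [hM', if_neg (Nat.not_lt_zero k), if_neg (Nat.not_lt_zero (k+1))]
      rw [hSz', hGp'] at IH
      rw [htot]
      have step := mul_lt_mul'' IH tb hP'pos.le (htpos 0 (by omega)).le
      refine lt_of_lt_of_le step ?_
      -- numeric comparison
      have e1 : (Sz s M (0+1)) ^ ν ≤ (Sz s M 0) ^ ν :=
        Real.rpow_le_rpow (hSnn (0+1)) (hSmono (0+1) (by omega)) hν.le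
      have hQnn : (0:ℝ) ≤ ∏ k ∈ Finset.range r, (Gp s M (k+1)) ^ ν :=
        Finset.prod_nonneg fun k hk => hgapnn (k+1) (by have := Finset.mem_range.mp hk; omega)
      have hg0 : (0:ℝ) ≤ (Gp s M 0) ^ ν := hgapnn 0 (by omega)
      have hsplit : ∏ k ∈ Finset.range (r+1), (Gp s M k) ^ ν
          = (∏ k ∈ Finset.range r, (Gp s M (k+1)) ^ ν) * (Gp s M 0) ^ ν :=
        Finset.prod_range_succ' _ r
      rw [hsplit]
      calc ((2:ℝ)^(2*ν+1)) ^ (r+1) * (Sz s M (0+1)) ^ ν *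
            (∏ k ∈ Finset.range r, (Gp s M (k+1)) ^ ν) * ((2:ℝ)^(ν+1) * (Gp s M 0) ^ ν)
          = ((2:ℝ)^(ν+1) * (Sz s M (0+1)) ^ ν) *
            (((2:ℝ)^(2*ν+1)) ^ (r+1) * (∏ k ∈ Finset.range r, (Gp s M (k+1)) ^ ν)
              * (Gp s M 0) ^ ν) := by ring
        _ ≤ ((2:ℝ)^(2*ν+1) * (Sz s M 0) ^ ν) *
            (((2:ℝ)^(2*ν+1)) ^ (r+1) * (∏ k ∈ Finset.range r, (Gp s M (k+1)) ^ ν)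
              * (Gp s M 0) ^ ν) := by
            apply mul_le_mul_of_nonneg_right
              (mul_le_mul hN2 e1 (Real.rpow_nonneg (hSnn (0+1)) ν) hNpos.le)
            exact mul_nonneg (mul_nonneg (pow_nonneg hNpos.le _) hQnn) hg0
        _ = ((2:ℝ)^(2*ν+1)) ^ (r+1+1) * (Sz s M 0) ^ ν *
            ((∏ k ∈ Finset.range r, (Gp s M (k+1)) ^ ν) * (Gp s M 0) ^ ν) := by ring
    · -- i = j + 1
      obtain ⟨j, rfl⟩ : ∃ j, i = j + 1 := ⟨i - 1, by omega⟩
      have hc := hchain j (by omega)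
      have hmin1 : min (eps s Λ q a (M j)) (eps s Λ q a (M (j+1))) = eps s Λ q a (M (j+1)) :=
        min_eq_right (hiMin j (Finset.mem_range.mpr (by omega)))
      have tb1 : Tt s Λ q a M (j+1) < (2:ℝ)^(ν+1) * (Gp s M j) ^ ν := by
        have h := (hE (M j) (M (j+1)) hc.1 hc.2).2
        rw [hmin1] at h
        exact h
      by_cases hjr : j + 1 ≤ r
      · -- Case C : interior removal
        have hc2 := hchain (j+1) (by omega)
        have hmin2 : min (eps s Λ q a (M (j+1))) (eps s Λ q a (M (j+1+1)))
            = eps s Λ q a (M (j+1)) :=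
          min_eq_left (hiMin (j+1+1) (Finset.mem_range.mpr (by omega)))
        have tb2 : Tt s Λ q a M (j+1) < (2:ℝ)^(ν+1) * (Gp s M (j+1)) ^ ν := by
          have h := (hE (M (j+1)) (M (j+1+1)) hc2.1 hc2.2).1
          rw [hmin2] at h
          exact h
        have tb : Tt s Λ q a M (j+1)
            < (2:ℝ)^(ν+1) * (min (Gp s M j) (Gp s M (j+1))) ^ ν := by
          rcases le_total (Gp s M j) (Gp s M (j+1)) with h | h
          · rw [min_eq_left h]; exact tb1
          · rw [min_eq_right h]; exact tb2
        obtain ⟨u, rfl⟩ : ∃ u, r = j + 1 + u := ⟨r - (j+1), by omega⟩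
        -- product decompositions
        have htot : ∏ k ∈ Finset.range (j+1+u+1+1), Tt s Λ q a M k
            = ((∏ k ∈ Finset.range (j+1), Tt s Λ q a M k) * Tt s Λ q a M (j+1)) *
              ∏ k ∈ Finset.range (u+1), Tt s Λ q a M (j+1+1+k) := by
          rw [show j+1+u+1+1 = (j+1)+1+(u+1) by omega]
          exact prod_split _ (j+1) (u+1)
        have hP'eq : ∏ k ∈ Finset.range (j+1+u+1), Tt s Λ q a M' k
            = (∏ k ∈ Finset.range (j+1), Tt s Λ q a M k) *
              ∏ k ∈ Finset.range (u+1), Tt s Λ q a M (j+1+1+k) := by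
          rw [show j+1+u+1 = (j+1)+(u+1) by omega, Finset.prod_range_add]
          congr 1
          · refine Finset.prod_congr rfl fun k hk => ?_
            have hk' : k < j + 1 := Finset.mem_range.mp hk
            unfold Tt; simp only [hM', if_pos hk']
          · refine Finset.prod_congr rfl fun k _ => ?_
            have hnk : ¬ (j+1+k < j+1) := by omega
            unfold Tt
            simp only [hM', if_neg hnk]
            rw [show j+1+k+1 = j+1+1+k by omega]
        have hSz' : Sz s M' 0 = Sz s M 0 := by
          unfold Sz; simp only [hM', if_pos (by omega : 0 < j+1)]
        have hGp' : ∏ k ∈ Finset.range (j+1+u), (Gp s M' k) ^ ν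
            = ((∏ k ∈ Finset.range j, (Gp s M k) ^ ν) *
                (Gp s M j + Gp s M (j+1)) ^ ν) *
              ∏ k ∈ Finset.range u, (Gp s M (j+1+1+k)) ^ ν := by
          rw [show j+1+u = j+1+u from rfl]
          rw [prod_split (fun k => (Gp s M' k) ^ ν) j u]
          congr 1
          · congr 1
            · refine Finset.prod_congr rfl fun k hk => ?_
              have hk' : k < j := Finset.mem_range.mp hk
              unfold Gp Sz
              simp only [hM', if_pos (by omega : k < j+1), if_pos (by omega : k+1 < j+1)]
            · unfold Gp Sz
              simp only [hM', if_pos (by omega : j < j+1), if_neg (by omega : ¬ (j+1 < j+1))]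
              ring
          · refine Finset.prod_congr rfl fun k _ => ?_
            unfold Gp Sz
            simp only [hM', if_neg (by omega : ¬ (j+1+k < j+1)),
              if_neg (by omega : ¬ (j+1+k+1 < j+1))]
            rw [show j+1+k+1 = j+1+1+k by omega, show j+1+1+k+1 = j+1+k+1+1 by omega]
        rw [hSz', hGp'] at IH
        rw [htot]
        have heq : ((∏ k ∈ Finset.range (j+1), Tt s Λ q a M k) * Tt s Λ q a M (j+1)) *
              ∏ k ∈ Finset.range (u+1), Tt s Λ q a M (j+1+1+k)
            = Tt s Λ q a M (j+1) * ((∏ k ∈ Finset.range (j+1), Tt s Λ q a M k) *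
              ∏ k ∈ Finset.range (u+1), Tt s Λ q a M (j+1+1+k)) := by ring
        rw [heq, ← hP'eq]
        have step := mul_lt_mul'' tb IH (htpos (j+1) (by omega)).le hP'pos.le
        refine lt_of_lt_of_le step ?_
        -- numeric comparison
        have hgj : (1:ℝ) ≤ Gp s M j := hgap j (by omega)
        have hgj1 : (1:ℝ) ≤ Gp s M (j+1) := hgap (j+1) (by omega)
        have habs : (min (Gp s M j) (Gp s M (j+1))) * (Gp s M j + Gp s M (j+1))
            ≤ 2 * (Gp s M j * Gp s M (j+1)) := by
          rcases le_total (Gp s M j) (Gp s M (j+1)) with h | h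
          · rw [min_eq_left h]; nlinarith
          · rw [min_eq_right h]; nlinarith
        have hmnn : (0:ℝ) ≤ min (Gp s M j) (Gp s M (j+1)) :=
          le_min (by linarith) (by linarith)
        have key : (2:ℝ)^(ν+1) * (min (Gp s M j) (Gp s M (j+1))) ^ ν *
              (Gp s M j + Gp s M (j+1)) ^ ν
            ≤ (2:ℝ)^(2*ν+1) * ((Gp s M j) ^ ν * (Gp s M (j+1)) ^ ν) := by
          have h1 : (min (Gp s M j) (Gp s M (j+1))) ^ ν * (Gp s M j + Gp s M (j+1)) ^ ν
              = ((min (Gp s M j) (Gp s M (j+1))) * (Gp s M j + Gp s M (j+1))) ^ ν :=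
            (Real.mul_rpow hmnn (by linarith)).symm
          have h2 : ((min (Gp s M j) (Gp s M (j+1))) * (Gp s M j + Gp s M (j+1))) ^ ν
              ≤ ((2:ℝ) * (Gp s M j * Gp s M (j+1))) ^ ν :=
            Real.rpow_le_rpow (mul_nonneg hmnn (by linarith)) habs hν.le
          have h3 : ((2:ℝ) * (Gp s M j * Gp s M (j+1))) ^ ν
              = (2:ℝ)^ν * ((Gp s M j) ^ ν * (Gp s M (j+1)) ^ ν) := by
            rw [Real.mul_rpow (by norm_num) (by positivity),
              Real.mul_rpow (by linarith) (by linarith)]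
          have h4 : (2:ℝ)^(ν+1) * (2:ℝ)^ν = (2:ℝ)^(2*ν+1) := by
            rw [← Real.rpow_add two_pos]; ring_nf
          calc (2:ℝ)^(ν+1) * (min (Gp s M j) (Gp s M (j+1))) ^ ν *
                (Gp s M j + Gp s M (j+1)) ^ ν
              = (2:ℝ)^(ν+1) * ((min (Gp s M j) (Gp s M (j+1))) ^ ν *
                (Gp s M j + Gp s M (j+1)) ^ ν) := by ring
            _ ≤ (2:ℝ)^(ν+1) * ((2:ℝ)^ν * ((Gp s M j) ^ ν * (Gp s M (j+1)) ^ ν)) := by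
                rw [h1]
                apply mul_le_mul_of_nonneg_left _ (Real.rpow_nonneg (by norm_num) _)
                rw [← h3] at *
                exact h2
            _ = (2:ℝ)^(2*ν+1) * ((Gp s M j) ^ ν * (Gp s M (j+1)) ^ ν) := by
                rw [← h4]; ring
        have hA2nn : (0:ℝ) ≤ ∏ k ∈ Finset.range j, (Gp s M k) ^ ν :=
          Finset.prod_nonneg fun k hk => hgapnn k (by have := Finset.mem_range.mp hk; omega)
        have hC2nn : (0:ℝ) ≤ ∏ k ∈ Finset.range u, (Gp s M (j+1+1+k)) ^ ν :=
          Finset.prod_nonneg fun k hk => hgapnn (j+1+1+k)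
            (by have := Finset.mem_range.mp hk; omega)
        have hsplit : ∏ k ∈ Finset.range (j+1+u+1), (Gp s M k) ^ ν
            = (((∏ k ∈ Finset.range j, (Gp s M k) ^ ν) * (Gp s M j) ^ ν) *
                (Gp s M (j+1)) ^ ν) *
              ∏ k ∈ Finset.range u, (Gp s M (j+1+1+k)) ^ ν := by
          rw [show j+1+u+1 = (j+1)+1+u by omega,
            prod_split (fun k => (Gp s M k) ^ ν) (j+1) u, Finset.prod_range_succ]
        rw [hsplit]
        calc (2:ℝ)^(ν+1) * (min (Gp s M j) (Gp s M (j+1))) ^ ν *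
              (((2:ℝ)^(2*ν+1)) ^ (j+1+u+1) * Sz s M 0 ^ ν *
                (((∏ k ∈ Finset.range j, (Gp s M k) ^ ν) *
                  (Gp s M j + Gp s M (j+1)) ^ ν) *
                  ∏ k ∈ Finset.range u, (Gp s M (j+1+1+k)) ^ ν))
            = ((2:ℝ)^(ν+1) * (min (Gp s M j) (Gp s M (j+1))) ^ ν *
                (Gp s M j + Gp s M (j+1)) ^ ν) *
              (((2:ℝ)^(2*ν+1)) ^ (j+1+u+1) * Sz s M 0 ^ ν *
                (∏ k ∈ Finset.range j, (Gp s M k) ^ ν) *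
                ∏ k ∈ Finset.range u, (Gp s M (j+1+1+k)) ^ ν) := by ring
          _ ≤ ((2:ℝ)^(2*ν+1) * ((Gp s M j) ^ ν * (Gp s M (j+1)) ^ ν)) *
              (((2:ℝ)^(2*ν+1)) ^ (j+1+u+1) * Sz s M 0 ^ ν *
                (∏ k ∈ Finset.range j, (Gp s M k) ^ ν) *
                ∏ k ∈ Finset.range u, (Gp s M (j+1+1+k)) ^ ν) := by
              apply mul_le_mul_of_nonneg_right key
              apply mul_nonneg
              apply mul_nonneg
              exact mul_nonneg (pow_nonneg hNpos.le _) (Real.rpow_nonneg (hSnn 0) ν)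
              exact hA2nn
              exact hC2nn
          _ = ((2:ℝ)^(2*ν+1)) ^ (j+1+u+1+1) * Sz s M 0 ^ ν *
              ((((∏ k ∈ Finset.range j, (Gp s M k) ^ ν) * (Gp s M j) ^ ν) *
                (Gp s M (j+1)) ^ ν) *
                ∏ k ∈ Finset.range u, (Gp s M (j+1+1+k)) ^ ν) := by ring
      · -- Case B : remove the last index, j = r
        have hjr' : j = r := by omega
        subst hjr'
        have hP'eq : ∏ k ∈ Finset.range (j+1), Tt s Λ q a M' k
            = ∏ k ∈ Finset.range (j+1), Tt s Λ q a M k :=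
          Finset.prod_congr rfl fun k hk => by
            have hk' : k < j + 1 := Finset.mem_range.mp hk
            unfold Tt; simp only [hM', if_pos hk']
        have htot : ∏ k ∈ Finset.range (j+1+1), Tt s Λ q a M k
            = (∏ k ∈ Finset.range (j+1), Tt s Λ q a M' k) * Tt s Λ q a M (j+1) := by
          rw [hP'eq, Finset.prod_range_succ]
        have hSz' : Sz s M' 0 = Sz s M 0 := by
          unfold Sz; simp only [hM', if_pos (by omega : 0 < j+1)]
        have hGp' : ∏ k ∈ Finset.range j, (Gp s M' k) ^ ν
            = ∏ k ∈ Finset.range j, (Gp s M k) ^ ν :=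
          Finset.prod_congr rfl fun k hk => by
            have hk' : k < j := Finset.mem_range.mp hk
            unfold Gp Sz
            simp only [hM', if_pos (by omega : k < j+1), if_pos (by omega : k+1 < j+1)]
        rw [hSz', hGp'] at IH
        rw [htot]
        have step := mul_lt_mul'' IH tb1 hP'pos.le (htpos (j+1) (by omega)).le
        refine lt_of_lt_of_le step ?_
        have hQnn : (0:ℝ) ≤ ∏ k ∈ Finset.range j, (Gp s M k) ^ ν :=
          Finset.prod_nonneg fun k hk => hgapnn k (by have := Finset.mem_range.mp hk; omega)
        have hgj : (0:ℝ) ≤ (Gp s M j) ^ ν := hgapnn j (by omega)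
        rw [Finset.prod_range_succ]
        calc ((2:ℝ)^(2*ν+1)) ^ (j+1) * Sz s M 0 ^ ν *
              (∏ k ∈ Finset.range j, (Gp s M k) ^ ν) * ((2:ℝ)^(ν+1) * (Gp s M j) ^ ν)
            = (2:ℝ)^(ν+1) * (((2:ℝ)^(2*ν+1)) ^ (j+1) * Sz s M 0 ^ ν *
                (∏ k ∈ Finset.range j, (Gp s M k) ^ ν) * (Gp s M j) ^ ν) := by ring
          _ ≤ (2:ℝ)^(2*ν+1) * (((2:ℝ)^(2*ν+1)) ^ (j+1) * Sz s M 0 ^ ν *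
                (∏ k ∈ Finset.range j, (Gp s M k) ^ ν) * (Gp s M j) ^ ν) := by
              apply mul_le_mul_of_nonneg_right hN2
              apply mul_nonneg
              apply mul_nonneg
              exact mul_nonneg (pow_nonneg hNpos.le _) (Real.rpow_nonneg (hSnn 0) ν)
              exact hQnn
              exact hgj
          _ = ((2:ℝ)^(2*ν+1)) ^ (j+1+1) * Sz s M 0 ^ ν *
              ((∏ k ∈ Finset.range j, (Gp s M k) ^ ν) * (Gp s M j) ^ ν) := by ring

lemma epsL_eq (s : ℕ) (Λ : ℂ) (q : Fin s → ℂ) (n : ℕ) (L : Polynomial ℂ) (a : Fin n → ℂ)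
    (hLfact : L = ∏ j, (Polynomial.X - Polynomial.C (a j))) (m : Fin s → ℕ) :
    epsL s Λ q L m = ∏ j, eps s Λ q (a j) m := by
  unfold epsL eps
  rw [hLfact, Polynomial.eval_prod, norm_prod]
  simp only [Polynomial.eval_sub, Polynomial.eval_X, Polynomial.eval_C, one_div,
    Finset.prod_inv_distrib]

/-- Corollary 1 of the paper. `L` is a monic polynomial of degree `n ≥ 1`
with `L(0) ≠ 0`, with roots `a₀, …, a_{n-1}` listed with multiplicity. -/
theorem stmt8 (s : ℕ) (hs : 1 ≤ s) (Λ : ℂ) (hΛ : Λ ≠ 0) (q : Fin s → ℂ) (hq : ∀ i, q i ≠ 0)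
    (n : ℕ) (hn : 1 ≤ n) (L : Polynomial ℂ) (a : Fin n → ℂ)
    (hLfact : L = ∏ j, (Polynomial.X - Polynomial.C (a j)))
    (hL0 : Polynomial.eval 0 L ≠ 0)
    (ν : ℝ) (hν : 0 < ν)
    (hS1 : ∀ j : Fin n, ∀ m : Fin s → ℕ, m ≠ 0 →
      ‖Λ * ∏ i, q i ^ m i - a j‖ > (2 : ℝ) ^ (-ν) * ((∑ i, m i : ℕ) : ℝ) ^ (-ν))
    (hS2 : ∀ j : Fin n, ∀ m : Fin s → ℕ, m ≠ 0 →
      ‖a j * ∏ i, q i ^ (-(m i : ℤ)) - Λ‖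
        > (2 : ℝ) ^ (-ν) * ((∑ i, m i : ℕ) : ℝ) ^ (-ν))
    (hE : ∀ j : Fin n, ∀ m p : Fin s → ℕ, (∀ i, p i ≤ m i) → (∑ i, p i) < (∑ i, m i) →
      smax s q m * min (eps s Λ q (a j) m) (eps s Λ q (a j) p) <
        (2 : ℝ) ^ (ν + 1) * (((∑ i, m i : ℕ) : ℝ) - ((∑ i, p i : ℕ) : ℝ)) ^ ν ∧
      smax s q p * min (eps s Λ q (a j) m) (eps s Λ q (a j) p) <
        (2 : ℝ) ^ (ν + 1) * (((∑ i, m i : ℕ) : ℝ) - ((∑ i, p i : ℕ) : ℝ)) ^ ν)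
    (N₁ : ℝ) (hN₁ : N₁ = (2 : ℝ) ^ (2 * ν + 1)) :
    ∀ (r : ℕ) (M : Fin (r + 1) → Fin s → ℕ),
      (∀ i : Fin r, (∀ j, M i.succ j ≤ M i.castSucc j) ∧
        (∑ j, M i.succ j) < (∑ j, M i.castSucc j)) →
      M (Fin.last r) ≠ 0 →
      ∏ i, smax s q (M i) ^ n * epsL s Λ q L (M i) <
        (N₁ ^ (r + 1) * ((∑ j, M 0 j : ℕ) : ℝ) ^ ν *
          ∏ i : Fin r, (((∑ j, M i.castSucc j : ℕ) : ℝ) - ((∑ j, M i.succ j : ℕ) : ℝ)) ^ ν) ^ n := by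
  subst hN₁
  intro r M hchain hlast
  set Mn : ℕ → Fin s → ℕ := fun k => M ⟨min k r, Nat.lt_succ_of_le (min_le_right k r)⟩ with hMn
  have hMeq : ∀ i : Fin (r+1), M i = Mn i.val := by
    intro i
    simp only [hMn]
    exact (congrArg M (Fin.ext (min_eq_left (Nat.lt_succ_iff.mp i.isLt)))).symm
  have hMcast : ∀ (k : ℕ) (hk : k < r), Mn k = M (Fin.castSucc ⟨k, hk⟩) := by
    intro k hk
    simp only [hMn]
    exact congrArg M (Fin.ext (min_eq_left hk.le))
  have hMsucc : ∀ (k : ℕ) (hk : k < r), Mn (k+1) = M (Fin.succ ⟨k, hk⟩) := by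
    intro k hk
    simp only [hMn]
    exact congrArg M (Fin.ext (min_eq_left hk))
  have chainMn : ∀ k < r, (∀ j, Mn (k+1) j ≤ Mn k j) ∧
      (∑ j, Mn (k+1) j) < (∑ j, Mn k j) := by
    intro k hk
    rw [hMcast k hk, hMsucc k hk]
    exact hchain ⟨k, hk⟩
  have lastMn : Mn r ≠ 0 := by
    have : Mn r = M (Fin.last r) := by
      simp only [hMn]; exact congrArg M (Fin.ext (by simp [Fin.last]))
    rw [this]; exact hlast
  have hszn : ∀ u k, k + u ≤ r → (∑ j, Mn (k+u) j) ≤ ∑ j, Mn k j := by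
    intro u
    induction u with
    | zero => intro k _; simp
    | succ u iht =>
      intro k hk
      have h1 : k + (u+1) = (k+u) + 1 := by omega
      rw [h1]
      exact le_trans (chainMn (k+u) (by omega)).2.le (iht k (by omega))
  have hMnne : ∀ k, k ≤ r → Mn k ≠ 0 := by
    intro k hk h0
    apply lastMn
    have := hszn (r-k) k (by omega)
    rw [show k + (r-k) = r by omega] at this
    rw [h0] at this
    simp only [Pi.zero_apply, Finset.sum_const_zero, Nat.le_zero] at this
    funext j
    exact Finset.sum_eq_zero_iff.mp this j (Finset.mem_univ j)
  have hMine : ∀ i : Fin (r+1), M i ≠ 0 := by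
    intro i
    rw [hMeq i]
    exact hMnne i.val (Nat.lt_succ_iff.mp i.isLt)
  -- rewrite the left-hand side
  have hLHS : ∏ i, smax s q (M i) ^ n * epsL s Λ q L (M i)
      = ∏ j : Fin n, ∏ i : Fin (r+1), (smax s q (M i) * eps s Λ q (a j) (M i)) := by
    rw [← Finset.prod_comm]
    refine Finset.prod_congr rfl fun i _ => ?_
    rw [Finset.prod_mul_distrib, Finset.prod_const, Finset.card_univ, Fintype.card_fin,
      epsL_eq s Λ q n L a hLfact]
  -- rewrite the right-hand side
  have hRHS : (((2:ℝ) ^ (2*ν+1)) ^ (r + 1) * ((∑ j, M 0 j : ℕ) : ℝ) ^ ν *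
        ∏ i : Fin r, (((∑ j, M i.castSucc j : ℕ) : ℝ) - ((∑ j, M i.succ j : ℕ) : ℝ)) ^ ν) ^ n
      = ∏ _j : Fin n, (((2:ℝ) ^ (2*ν+1)) ^ (r + 1) * ((∑ j, M 0 j : ℕ) : ℝ) ^ ν *
        ∏ i : Fin r, (((∑ j, M i.castSucc j : ℕ) : ℝ) - ((∑ j, M i.succ j : ℕ) : ℝ)) ^ ν) := by
    rw [Finset.prod_const, Finset.card_univ, Fintype.card_fin]
  rw [hLHS, hRHS]
  have hne : (Finset.univ : Finset (Fin n)).Nonempty := by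
    refine ⟨⟨0, hn⟩, Finset.mem_univ _⟩
  apply Finset.prod_lt_prod_of_nonempty _ _ hne
  · intro j _
    apply Finset.prod_pos
    intro i _
    exact mul_pos (smax_pos s q (M i)) (eps_pos s Λ q (a j) ν hν (hS1 j) (M i) (hMine i))
  · intro j _
    have hcore := core s Λ q (a j) ν hν
      (fun m hm => eps_pos s Λ q (a j) ν hν (hS1 j) m hm)
      (fun m hm => termBound s Λ q hq (a j) ν hν (hS1 j) (hS2 j) m hm)
      (hE j) r Mn chainMn lastMn
    have eL : ∏ i : Fin (r+1), (smax s q (M i) * eps s Λ q (a j) (M i))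
        = ∏ k ∈ Finset.range (r+1), Tt s Λ q (a j) Mn k := by
      rw [← Fin.prod_univ_eq_prod_range (fun k => Tt s Λ q (a j) Mn k) (r+1)]
      refine Finset.prod_congr rfl fun i _ => ?_
      unfold Tt
      rw [← hMeq i]
    have eS : Sz s Mn 0 = ((∑ j, M 0 j : ℕ) : ℝ) := by
      unfold Sz
      congr 2
    have eG : ∏ i : Fin r, (((∑ j, M i.castSucc j : ℕ) : ℝ) - ((∑ j, M i.succ j : ℕ) : ℝ)) ^ ν
        = ∏ k ∈ Finset.range r, (Gp s Mn k) ^ ν := by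
      rw [← Fin.prod_univ_eq_prod_range (fun k => (Gp s Mn k) ^ ν) r]
      refine Finset.prod_congr rfl fun i _ => ?_
      unfold Gp Sz
      rw [hMcast i.val i.isLt, hMsucc i.val i.isLt]
    rw [eL, eG, ← eS]
    exact hcore
end
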